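/- arXiv:math/0406018 — 3 statements merged into one kernel-verified Lean document; each statement's English description precedes it below -/
import Mathlib

section
/- Suppose q ≤ x is a positive integer with h(q) > 6 and 𝒜(x) > 0. Then either |𝒜(x; q, 0) − (h(q)/q)·𝒜(x)| ≥ (1/2)·(h(q)/q)·𝒜(x), or for every prime ℓ with 3·(x + q)/h(q) ≤ ℓ ≤ x and ℓ ∤ q there is a residue class b (mod ℓ) such that |𝒜(x; ℓ, b) − (f_ℓ(b)/(ℓ·γ_ℓ))·𝒜(x)| ≥ (1/2)·(f_ℓ(b)/(ℓ·γ_ℓ))·𝒜(x). -/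
open scoped Classical

noncomputable section

/-- `𝒜(x) = Σ_{n ≤ x} a(n)`. -/
def Acal (a : ℕ → ℝ) (x : ℝ) : ℝ := ∑ n ∈ Finset.Icc 1 ⌊x⌋₊, a n

/-- `𝒜(x; q, b) = Σ_{n ≤ x, n ≡ b (mod q)} a(n)`. -/
def AcalMod (a : ℕ → ℝ) (x : ℝ) (q : ℕ) (b : ℤ) : ℝ :=
  ∑ n ∈ (Finset.Icc 1 ⌊x⌋₊).filter (fun n : ℕ => (n : ℤ) % (q : ℤ) = b % (q : ℤ)), a n

/-- `h` is multiplicative: `h(1) = 1` and `h(mn) = h(m)h(n)` for coprime `m, n`. -/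
def IsMultFun (h : ℕ → ℝ) : Prop :=
  h 1 = 1 ∧ ∀ m n : ℕ, Nat.Coprime m n → h (m * n) = h m * h n

/-- `γ_q = ∏_{p | q} (p - 1)/(p - h(p))`. -/
def gammaq (h : ℕ → ℝ) (q : ℕ) : ℝ :=
  ∏ p ∈ q.primeFactors, ((p : ℝ) - 1) / ((p : ℝ) - h p)

/-- The multiplicative function `f_q` evaluated at the integer `b`, i.e. at
`gcd(b, q)`:  `f_q(p^k) = 1` for `p ∤ q`; if `p^e ∥ q` then
`f_q(p^k) = (h(p^k) - h(p^{k+1})/p)/(1 - h(p)/p)` for `1 ≤ k < e` and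
`f_q(p^k) = h(p^e)(1 - 1/p)/(1 - h(p)/p)` for `k ≥ e`. -/
def fq (h : ℕ → ℝ) (q : ℕ) (b : ℤ) : ℝ :=
  ∏ p ∈ q.primeFactors,
    (if (Int.gcd b (q : ℤ)).factorization p = 0 then 1
     else if (Int.gcd b (q : ℤ)).factorization p < q.factorization p then
       (h (p ^ (Int.gcd b (q : ℤ)).factorization p) -
         h (p ^ ((Int.gcd b (q : ℤ)).factorization p + 1)) / (p : ℝ)) / (1 - h p / (p : ℝ))
     else h (p ^ q.factorization p) * (1 - 1 / (p : ℝ)) / (1 - h p / (p : ℝ)))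

/-- `Δ_q(x) = sup_{x/4 ≤ y ≤ x} max_{b (mod q)}
`|𝒜(y;q,b) − (f_q(b)/(qγ_q))·(y/x)·𝒜(x)| / (𝒜(x)/φ(q))`. -/
def Deltaq (a h : ℕ → ℝ) (q : ℕ) (x : ℝ) : ℝ :=
  sSup {d : ℝ | ∃ y : ℝ, ∃ b : ℤ, x / 4 ≤ y ∧ y ≤ x ∧
    d = |AcalMod a y q b - fq h q b / (q * gammaq h q) * (y / x) * Acal a x| /
      (Acal a x / (Nat.totient q : ℝ))}

/-- `Δ̃(y,x) = sup_{(v,v+y) ⊆ (x/4,x)} |𝒜(v+y) − 𝒜(v) − y·𝒜(x)/x| / (y·𝒜(x)/x)`. -/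
def DeltaTilde (a : ℕ → ℝ) (y x : ℝ) : ℝ :=
  sSup {d : ℝ | ∃ v : ℝ, x / 4 ≤ v ∧ v + y ≤ x ∧
    d = |Acal a (v + y) - Acal a v - y * Acal a x / x| / (y * Acal a x / x)}

/-- A non-negative multiplicative function with `h(p^k) < p^k` satisfies `h(n) ≤ n`. -/
lemma multFun_le_self (h : ℕ → ℝ) (hmul : IsMultFun h) (hnn : ∀ n, 0 ≤ h n)
    (hlt : ∀ p k : ℕ, Nat.Prime p → 1 ≤ k → h (p ^ k) < (p : ℝ) ^ k) :
    ∀ n : ℕ, 0 < n → h n ≤ (n : ℝ) := by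
  intro n
  induction n using Nat.recOnPrimePow with
  | zero => intro h0; exact absurd h0 (lt_irrefl 0)
  | one => intro _; simp [hmul.1]
  | prime_pow_mul a p k hp hpa hk ih =>
    intro hpos
    have ha0 : 0 < a := by
      rcases Nat.eq_zero_or_pos a with h0 | h0
      · subst h0; simp at hpos
      · exact h0
    have hcop : Nat.Coprime (p ^ k) a :=
      Nat.Coprime.pow_left k ((Nat.Prime.coprime_iff_not_dvd hp).mpr hpa)
    rw [hmul.2 _ _ hcop]
    push_cast
    exact mul_le_mul (le_of_lt (hlt p k hp hk)) (ih ha0) (hnn a)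
      (by positivity)

theorem statement4 (a h : ℕ → ℝ) (x : ℝ)
    (ha : ∀ n, 0 ≤ a n)
    (hmul : IsMultFun h)
    (hnn : ∀ n, 0 ≤ h n)
    (hlt : ∀ p k : ℕ, Nat.Prime p → 1 ≤ k → h (p ^ k) < (p : ℝ) ^ k)
    (q : ℕ) (hq : 0 < q) (hqx : (q : ℝ) ≤ x)
    (hq6 : 6 < h q) (hA : 0 < Acal a x) :
    (1 / 2) * (h q / q) * Acal a x ≤ |AcalMod a x q 0 - h q / q * Acal a x| ∨
    ∀ ℓ : ℕ, Nat.Prime ℓ → 3 * (x + q) / h q ≤ (ℓ : ℝ) → (ℓ : ℝ) ≤ x → ¬ ℓ ∣ q →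
      ∃ b : ℤ, (1 / 2) * (fq h ℓ b / (ℓ * gammaq h ℓ)) * Acal a x ≤
        |AcalMod a x ℓ b - fq h ℓ b / (ℓ * gammaq h ℓ) * Acal a x| := by
  by_cases hL : (1 / 2) * (h q / q) * Acal a x ≤ |AcalMod a x q 0 - h q / q * Acal a x|
  · exact Or.inl hL
  right
  push_neg at hL
  set A := Acal a x with hAdef
  have hq0 : (0 : ℝ) < q := by exact_mod_cast hq
  have hqne : (q : ℝ) ≠ 0 := ne_of_gt hq0
  have hx0 : (0 : ℝ) < x := lt_of_lt_of_le hq0 hqx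
  have hhq0 : 0 < h q := lt_trans (by norm_num) hq6
  have hhqle : h q ≤ q := multFun_le_self h hmul hnn hlt q hq
  -- lower bound on the mass of multiples of q
  have hM : h q / q * A / 2 < AcalMod a x q 0 := by
    have h1 := (abs_lt.1 hL).1
    linarith
  set S := (Finset.Icc 1 ⌊x⌋₊).filter
      (fun n : ℕ => (n : ℤ) % (q : ℤ) = (0 : ℤ) % (q : ℤ)) with hSdef
  have hMS : AcalMod a x q 0 = ∑ n ∈ S, a n := rfl
  have hmemS : ∀ n ∈ S, (1 ≤ n ∧ n ≤ ⌊x⌋₊) ∧ q ∣ n := by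
    intro n hn
    rw [hSdef, Finset.mem_filter, Finset.mem_Icc] at hn
    refine ⟨hn.1, ?_⟩
    have h2 : (q : ℤ) ∣ (n : ℤ) := by
      rw [Int.dvd_iff_emod_eq_zero]
      simpa using hn.2
    exact_mod_cast h2
  -- card bound
  have hSsub : S ⊆ (Finset.Icc 1 (⌊x⌋₊ / q)).image (· * q) := by
    intro n hn
    obtain ⟨⟨h1n, hnx⟩, hdvd⟩ := hmemS n hn
    refine Finset.mem_image.2 ⟨n / q, ?_, Nat.div_mul_cancel hdvd⟩
    rw [Finset.mem_Icc]
    exact ⟨(Nat.one_le_div_iff hq).2 (Nat.le_of_dvd h1n hdvd), Nat.div_le_div_right hnx⟩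
  have hcardq : (S.card : ℝ) * q ≤ x := by
    have h1 : S.card ≤ ⌊x⌋₊ / q :=
      calc S.card ≤ ((Finset.Icc 1 (⌊x⌋₊ / q)).image (· * q)).card :=
            Finset.card_le_card hSsub
        _ ≤ (Finset.Icc 1 (⌊x⌋₊ / q)).card := Finset.card_image_le
        _ ≤ ⌊x⌋₊ / q := le_of_eq (by rw [Nat.card_Icc, Nat.add_sub_cancel])
    have h2 : S.card * q ≤ ⌊x⌋₊ :=
      le_trans (Nat.mul_le_mul_right q h1) (Nat.div_mul_le_self _ _)
    calc (S.card : ℝ) * q = ((S.card * q : ℕ) : ℝ) := by push_cast; ring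
      _ ≤ (⌊x⌋₊ : ℝ) := by exact_mod_cast h2
      _ ≤ x := Nat.floor_le hx0.le
  -- the heaviest multiple of q
  have hSne : S.Nonempty := by
    by_contra hne
    rw [Finset.not_nonempty_iff_eq_empty] at hne
    rw [hMS, hne, Finset.sum_empty] at hM
    have hpos : 0 < h q / q * A / 2 := by positivity
    linarith
  obtain ⟨n₀, hn₀S, hn₀max⟩ := Finset.exists_max_image S a hSne
  obtain ⟨⟨h1n₀, hn₀x⟩, hqn₀⟩ := hmemS n₀ hn₀S
  have ha0 : 0 ≤ a n₀ := ha n₀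
  have hsum_le : AcalMod a x q 0 ≤ (S.card : ℝ) * a n₀ := by
    rw [hMS]
    calc ∑ n ∈ S, a n ≤ ∑ _n ∈ S, a n₀ := Finset.sum_le_sum fun i hi => hn₀max i hi
      _ = (S.card : ℝ) * a n₀ := by rw [Finset.sum_const, nsmul_eq_mul]
  have hcardle : (S.card : ℝ) ≤ x / q := by rw [le_div_iff₀ hq0]; exact hcardq
  have h9 : h q / q * A / 2 < x / q * a n₀ :=
    (hM.trans_le hsum_le).trans_le (mul_le_mul_of_nonneg_right hcardle ha0)
  have h10 : h q * A / 2 < x * a n₀ := by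
    have h9q := mul_lt_mul_of_pos_right h9 hq0
    have e1 : h q / q * A / 2 * q = h q * A / 2 := by field_simp
    have e2 : x / q * a n₀ * q = x * a n₀ := by field_simp
    rwa [e1, e2] at h9q
  -- now fix ℓ
  intro ℓ hℓp hℓlo hℓhi hℓq
  have hL0 : (0 : ℝ) < ℓ := by exact_mod_cast hℓp.pos
  have hℓ1 : (1 : ℝ) < ℓ := by exact_mod_cast hℓp.one_lt
  have hhl : h ℓ < ℓ := by
    have := hlt ℓ 1 hℓp le_rfl
    simpa using this
  have hhl0 : 0 ≤ h ℓ := hnn ℓ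
  have h3 : 3 * (x + q) ≤ h q * ℓ := by
    rw [div_le_iff₀ hhq0] at hℓlo
    linarith
  -- ℓ does not divide n₀
  have hℓn₀ : ¬ ℓ ∣ n₀ := by
    intro hd
    have hcop : Nat.Coprime ℓ q := (hℓp.coprime_iff_not_dvd).2 hℓq
    have hdd : ℓ * q ∣ n₀ := Nat.Coprime.mul_dvd_of_dvd_of_dvd hcop hd hqn₀
    have h1 : (ℓ * q : ℕ) ≤ n₀ := Nat.le_of_dvd h1n₀ hdd
    have h2 : ((ℓ * q : ℕ) : ℝ) ≤ x := by
      calc ((ℓ * q : ℕ) : ℝ) ≤ (n₀ : ℝ) := by exact_mod_cast h1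
        _ ≤ (⌊x⌋₊ : ℝ) := by exact_mod_cast hn₀x
        _ ≤ x := Nat.floor_le hx0.le
    have h2' : (ℓ : ℝ) * q ≤ x := by push_cast at h2; linarith
    nlinarith [mul_nonneg (sub_nonneg.2 hhqle) hL0.le]
  -- fq and gammaq at ℓ
  have hgcd : Int.gcd (n₀ : ℤ) (ℓ : ℤ) = 1 := by
    have hc : Nat.Coprime n₀ ℓ := Nat.coprime_comm.1 ((hℓp.coprime_iff_not_dvd).2 hℓn₀)
    simpa [Int.gcd_natCast_natCast] using hc
  have hfq : fq h ℓ (n₀ : ℤ) = 1 := by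
    rw [fq, hℓp.primeFactors, Finset.prod_singleton, hgcd]
    simp
  have hγ : gammaq h ℓ = ((ℓ : ℝ) - 1) / ((ℓ : ℝ) - h ℓ) := by
    rw [gammaq, hℓp.primeFactors, Finset.prod_singleton]
  refine ⟨(n₀ : ℤ), ?_⟩
  rw [hfq, hγ]
  have hden : (0 : ℝ) < (ℓ : ℝ) - h ℓ := by linarith
  have hc : (1 : ℝ) / ((ℓ : ℝ) * (((ℓ : ℝ) - 1) / ((ℓ : ℝ) - h ℓ)))
      = ((ℓ : ℝ) - h ℓ) / ((ℓ : ℝ) * ((ℓ : ℝ) - 1)) := by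
    have e1 : (ℓ : ℝ) ≠ 0 := ne_of_gt hL0
    have e2 : (ℓ : ℝ) - 1 ≠ 0 := by linarith
    have e3 : (ℓ : ℝ) - h ℓ ≠ 0 := ne_of_gt hden
    field_simp
  rw [hc]
  set c : ℝ := ((ℓ : ℝ) - h ℓ) / ((ℓ : ℝ) * ((ℓ : ℝ) - 1)) with hcdef
  have hc0 : 0 ≤ c := div_nonneg hden.le (mul_pos hL0 (by linarith)).le
  -- key bound : c ≤ h q / (3 x)
  have hkey : c ≤ h q / (3 * x) := by
    rw [hcdef, div_le_div_iff₀ (mul_pos hL0 (by linarith)) (by positivity)]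
    have t1 : 0 ≤ ((q : ℝ) - h q) * ℓ := mul_nonneg (by linarith) hL0.le
    have t2 : 3 * (x + q) * ((ℓ : ℝ) - 1) ≤ h q * ℓ * ((ℓ : ℝ) - 1) :=
      mul_le_mul_of_nonneg_right h3 (by linarith)
    have t3 : 0 ≤ x * h ℓ := mul_nonneg hx0.le hhl0
    linarith [t1, t2, t3, h3, hx0, hq0]
  -- a n₀ is at least 3/2 of the main term
  have han₀ : 3 / 2 * c * A ≤ a n₀ := by
    have h11 : 3 / 2 * c * A ≤ 3 / 2 * (h q / (3 * x)) * A :=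
      mul_le_mul_of_nonneg_right (mul_le_mul_of_nonneg_left hkey (by norm_num)) hA.le
    have h12 : 3 / 2 * (h q / (3 * x)) * A = h q * A / (2 * x) := by
      field_simp
    have h13 : h q * A / (2 * x) ≤ a n₀ := by
      rw [div_le_iff₀ (by positivity)]
      linarith
    linarith [h11, h12 ▸ h11]
  -- the class b = n₀ mod ℓ contains n₀
  have hmem : n₀ ∈ (Finset.Icc 1 ⌊x⌋₊).filter
      (fun n : ℕ => (n : ℤ) % (ℓ : ℤ) = ((n₀ : ℤ)) % (ℓ : ℤ)) := by
    rw [Finset.mem_filter, Finset.mem_Icc]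
    exact ⟨⟨h1n₀, hn₀x⟩, rfl⟩
  have hZ : a n₀ ≤ AcalMod a x ℓ (n₀ : ℤ) :=
    Finset.single_le_sum (fun i _ => ha i) hmem
  have hcA : 0 ≤ c * A := mul_nonneg hc0 hA.le
  calc (1 / 2) * c * A = 3 / 2 * c * A - c * A := by ring
    _ ≤ AcalMod a x ℓ (n₀ : ℤ) - c * A := by linarith
    _ ≤ |AcalMod a x ℓ (n₀ : ℤ) - c * A| := le_abs_self _
end
end

section
/- There is an absolute constant c > 0 such that for all sufficiently large x the following holds. Assume 𝒜(x) > 0, let q ≤ √x be a positive integer with (q, 𝒮) = 1, and let y ≤ x/4 be a positive integer. Then (q/φ(q))·Δ_q(x) + Δ̃(y, x) ≥ c·|(1/(γ_q·y))·Σ_{s ≤ y} f_q(s) − 1|, where s runs over positive integers. -/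
open scoped Classical

set_option maxHeartbeats 1000000
noncomputable section

/-! ### Auxiliary lemmas -/

lemma acalmod_diff' (a : ℕ → ℝ) {q : ℕ} (hq : 0 < q) {s : ℕ} (hs : 1 ≤ s) {m' m : ℕ}
    (hmm : m' ≤ m) :
    AcalMod a ((m * q + s : ℕ) : ℝ) q (s : ℤ) - AcalMod a ((m' * q + s : ℕ) : ℝ) q (s : ℤ)
      = ∑ k ∈ Finset.Icc (m' + 1) m, a (k * q + s) := by
  unfold AcalMod
  rw [Nat.floor_natCast, Nat.floor_natCast]
  set P : ℕ → Prop := fun n : ℕ => (n : ℤ) % (q : ℤ) = (s : ℤ) % (q : ℤ) with hP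
  have hsub : (Finset.Icc 1 (m' * q + s)).filter P ⊆ (Finset.Icc 1 (m * q + s)).filter P := by
    apply Finset.filter_subset_filter
    apply Finset.Icc_subset_Icc_right
    have : m' * q ≤ m * q := Nat.mul_le_mul_right q hmm
    omega
  rw [← Finset.sum_sdiff_eq_sub hsub]
  have hset : (Finset.Icc 1 (m * q + s)).filter P \ (Finset.Icc 1 (m' * q + s)).filter P
      = (Finset.Icc (m' + 1) m).image (fun k => k * q + s) := by
    ext n
    simp only [Finset.mem_sdiff, Finset.mem_filter, Finset.mem_Icc, Finset.mem_image, not_and]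
    constructor
    · rintro ⟨⟨⟨h1, h2⟩, h3⟩, h4⟩
      have hn' : m' * q + s < n := by
        by_contra hc
        push_neg at hc
        exact (h4 ⟨h1, hc⟩) h3
      have hns : s ≤ n := by omega
      have h3' : (s : ℤ) % (q : ℤ) = (n : ℤ) % (q : ℤ) := h3.symm
      have hdvd : (q : ℤ) ∣ ((n : ℤ) - (s : ℤ)) := Int.ModEq.dvd h3'
      have hdvdn : q ∣ (n - s) := by
        have hc : ((n - s : ℕ) : ℤ) = (n : ℤ) - (s : ℤ) := by push_cast [hns]; ring
        exact_mod_cast hc ▸ hdvd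
      obtain ⟨t, ht⟩ := hdvdn
      have hqt : q * t = t * q := Nat.mul_comm q t
      have hn : n = t * q + s := by omega
      have ht1 : m' < t := by
        have : m' * q < t * q := by omega
        exact (Nat.mul_lt_mul_right hq).mp this
      have ht2 : t ≤ m := by
        have : t * q ≤ m * q := by omega
        exact Nat.le_of_mul_le_mul_right this hq
      exact ⟨t, ⟨by omega, ht2⟩, hn.symm⟩
    · rintro ⟨k, ⟨hk1, hk2⟩, rfl⟩
      have hkq1 : m' * q < k * q := (Nat.mul_lt_mul_right hq).mpr (by omega)
      have hkq2 : k * q ≤ m * q := Nat.mul_le_mul_right q hk2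
      have hP' : P (k * q + s) := by
        show ((k * q + s : ℕ) : ℤ) % (q : ℤ) = (s : ℤ) % (q : ℤ)
        push_cast
        rw [add_comm]
        exact Int.add_mul_emod_self_right _ _ _
      exact ⟨⟨⟨by omega, by omega⟩, hP'⟩, fun ⟨h1, h2⟩ => absurd h2 (by omega)⟩
  rw [hset, Finset.sum_image]
  intro i _ j _ hij
  have : i * q = j * q := by simp only at hij; omega
  exact Nat.eq_of_mul_eq_mul_right hq this

lemma acal_diff' (a : ℕ → ℝ) (c y : ℕ) :
    Acal a ((c + y : ℕ) : ℝ) - Acal a ((c : ℕ) : ℝ) = ∑ s ∈ Finset.Icc 1 y, a (c + s) := by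
  unfold Acal
  rw [Nat.floor_natCast, Nat.floor_natCast]
  have hsub : Finset.Icc 1 c ⊆ Finset.Icc 1 (c + y) :=
    Finset.Icc_subset_Icc_right (by omega)
  rw [← Finset.sum_sdiff_eq_sub hsub]
  have hset : Finset.Icc 1 (c + y) \ Finset.Icc 1 c
      = (Finset.Icc 1 y).image (fun s => c + s) := by
    ext n
    simp only [Finset.mem_sdiff, Finset.mem_Icc, Finset.mem_image, not_and]
    constructor
    · rintro ⟨⟨h1, h2⟩, h3⟩
      exact ⟨n - c, by omega, by omega⟩
    · rintro ⟨k, ⟨hk1, hk2⟩, rfl⟩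
      omega
  rw [hset, Finset.sum_image]
  intro i _ j _ hij
  simp only at hij
  omega

lemma gammaq_pos {h : ℕ → ℝ} (hh : ∀ n, 0 ≤ h n ∧ h n ≤ 1) (q : ℕ) : 0 < gammaq h q := by
  apply Finset.prod_pos
  intro p hp
  have hp2 : 2 ≤ p := (Nat.prime_of_mem_primeFactors hp).two_le
  have hp2' : (2 : ℝ) ≤ (p : ℝ) := by exact_mod_cast hp2
  have := (hh p).2
  have := (hh p).1
  apply div_pos <;> linarith

lemma fq_abs_le {h : ℕ → ℝ} (hh : ∀ n, 0 ≤ h n ∧ h n ≤ 1) (q : ℕ) (b : ℤ) :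
    |fq h q b| ≤ 2 ^ q.primeFactors.card := by
  unfold fq
  rw [Finset.abs_prod]
  have : (2 : ℝ) ^ q.primeFactors.card = ∏ _p ∈ q.primeFactors, (2:ℝ) := by
    rw [Finset.prod_const]
  rw [this]
  apply Finset.prod_le_prod (fun _ _ => abs_nonneg _)
  intro p hp
  have hp2 : (2 : ℝ) ≤ (p : ℝ) := by exact_mod_cast (Nat.prime_of_mem_primeFactors hp).two_le
  have hppos : (0:ℝ) < p := by linarith
  have hden : (1:ℝ)/2 ≤ 1 - h p / p := by
    have h1 := (hh p).1
    have h2 := (hh p).2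
    have : h p / p ≤ 1 / 2 := div_le_div₀ (by norm_num) h2 (by norm_num) hp2
    linarith
  have hdenpos : (0:ℝ) < 1 - h p / p := by linarith
  split_ifs with h1 h2
  · rw [abs_one]; norm_num
  · rw [abs_div, abs_of_pos hdenpos, div_le_iff₀ hdenpos]
    have hn1 := (hh (p ^ (Int.gcd b (q:ℤ)).factorization p)).1
    have hn2 := (hh (p ^ (Int.gcd b (q:ℤ)).factorization p)).2
    have hm1 := (hh (p ^ ((Int.gcd b (q:ℤ)).factorization p + 1))).1
    have hm2 := (hh (p ^ ((Int.gcd b (q:ℤ)).factorization p + 1))).2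
    have hd : h (p ^ ((Int.gcd b (q:ℤ)).factorization p + 1)) / p ≤ 1/2 :=
      div_le_div₀ (by norm_num) hm2 (by norm_num) hp2
    have hd0 : 0 ≤ h (p ^ ((Int.gcd b (q:ℤ)).factorization p + 1)) / p := by positivity
    rw [abs_le]
    constructor <;> nlinarith
  · rw [abs_div, abs_of_pos hdenpos, div_le_iff₀ hdenpos]
    have hn1 := (hh (p ^ q.factorization p)).1
    have hn2 := (hh (p ^ q.factorization p)).2
    have hip : (0:ℝ) < 1 - 1/p := by
      rw [sub_pos, div_lt_one hppos]; linarith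
    have hip2 : 1 - 1/(p:ℝ) ≤ 1 := by
      have : (0:ℝ) ≤ 1/p := by positivity
      linarith
    rw [abs_of_nonneg (by positivity)]
    nlinarith

lemma acal_nonneg {a : ℕ → ℝ} (ha : ∀ n, 0 ≤ a n) (x : ℝ) : 0 ≤ Acal a x :=
  Finset.sum_nonneg fun n _ => ha n

lemma acal_mono {a : ℕ → ℝ} (ha : ∀ n, 0 ≤ a n) {x y : ℝ} (hxy : x ≤ y) :
    Acal a x ≤ Acal a y := by
  apply Finset.sum_le_sum_of_subset_of_nonneg
  · exact Finset.Icc_subset_Icc_right (Nat.floor_mono hxy)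
  · exact fun n _ _ => ha n

lemma acalmod_nonneg {a : ℕ → ℝ} (ha : ∀ n, 0 ≤ a n) (x : ℝ) (q : ℕ) (b : ℤ) :
    0 ≤ AcalMod a x q b := Finset.sum_nonneg fun n _ => ha n

lemma acalmod_le {a : ℕ → ℝ} (ha : ∀ n, 0 ≤ a n) {x y : ℝ} (hxy : y ≤ x) (q : ℕ) (b : ℤ) :
    AcalMod a y q b ≤ Acal a x := by
  calc AcalMod a y q b ≤ Acal a y := by
        apply Finset.sum_le_sum_of_subset_of_nonneg (Finset.filter_subset _ _)
        exact fun n _ _ => ha n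
    _ ≤ Acal a x := acal_mono ha hxy

theorem statement6 :
    ∃ c : ℝ, 0 < c ∧ ∃ x₀ : ℝ, ∀ x : ℝ, x₀ ≤ x →
    ∀ (a h : ℕ → ℝ) (S : Finset ℕ),
      (∀ n, 0 ≤ a n) →
      (∀ p ∈ S, Nat.Prime p) →
      IsMultFun h →
      (∀ n, 0 ≤ h n ∧ h n ≤ 1) →
      0 < Acal a x →
      ∀ q : ℕ, 0 < q → (q : ℝ) ≤ Real.sqrt x → (∀ p ∈ S, ¬ p ∣ q) →
      ∀ y : ℕ, 0 < y → (y : ℝ) ≤ x / 4 →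
        c * |(1 / (gammaq h q * (y : ℝ))) * ∑ s ∈ Finset.Icc 1 y, fq h q (s : ℤ) - 1| ≤
          ((q : ℝ) / (Nat.totient q : ℝ)) * Deltaq a h q x + DeltaTilde a (y : ℝ) x := by
  refine ⟨1/8, by norm_num, 256, ?_⟩
  intro x hx a h S ha _hS _hmul hh hA q hq hqx _hqS y hy hyx
  have hx0 : (0:ℝ) < x := by linarith
  have hq0 : (0:ℝ) < q := by exact_mod_cast hq
  have hγ : 0 < gammaq h q := gammaq_pos hh q
  have hφ0 : (0:ℝ) < (Nat.totient q : ℝ) := by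
    exact_mod_cast Nat.totient_pos.mpr hq
  have hy0 : (0:ℝ) < y := by exact_mod_cast hy
  have hy1 : (1:ℕ) ≤ y := hy
  -- q is small
  have hq16 : 16 * (q:ℝ) ≤ x := by
    have h1 : Real.sqrt x ≤ x / 16 := by
      rw [show x / 16 = Real.sqrt ((x/16)^2) by rw [Real.sqrt_sq]; positivity]
      exact Real.sqrt_le_sqrt (by nlinarith)
    nlinarith [hqx.trans h1]
  -- index bookkeeping
  set J : ℕ := ⌊x / (4*q)⌋₊ + 1 with hJdef
  set K₂ : ℕ := ⌊3*x / (4*q)⌋₊ with hK2def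
  have hx4q0 : (0:ℝ) ≤ x/(4*q) := by positivity
  have hJle : (J:ℝ) ≤ x/(4*q) + 1 := by
    have := Nat.floor_le hx4q0
    push_cast [hJdef]
    linarith
  have hJgt : x/4 < (J:ℝ) * q := by
    have h1 : x/(4*q) < (J:ℝ) := by
      have := Nat.lt_floor_add_one (x/(4*q))
      push_cast [hJdef]
      linarith
    calc x/4 = (x/(4*q)) * q := by field_simp
      _ < (J:ℝ) * q := by exact mul_lt_mul_of_pos_right h1 hq0
  have hK2le : (K₂:ℝ) * q ≤ 3*x/4 := by
    have h1 : (K₂:ℝ) ≤ 3*x/(4*q) := Nat.floor_le (by positivity)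
    calc (K₂:ℝ) * q ≤ (3*x/(4*q)) * q := mul_le_mul_of_nonneg_right h1 hq0.le
      _ = 3*x/4 := by field_simp
  have hK2gt : 3*x/(4*q) - 1 < (K₂:ℝ) := by
    have := Nat.lt_floor_add_one (3*x/(4*q))
    push_cast [hK2def]
    linarith
  have hx4q4 : (4:ℝ) ≤ x/(4*q) := by
    rw [le_div_iff₀ (by positivity)]
    linarith
  have hJK : J ≤ K₂ := by
    rw [hK2def]
    apply Nat.le_floor
    have hhalf : x/(4*q) + 1 ≤ 3*x/(4*q) := by
      have : x/(4*q) + x/(4*q) ≤ 3 * (x/(4*q)) := by linarith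
      have heq : 3*x/(4*q) = 3 * (x/(4*q)) := by ring
      linarith
    linarith
  set Nn : ℕ := K₂ - J with hNndef
  have hNcast : (Nn:ℝ) = (K₂:ℝ) - (J:ℝ) := by
    rw [hNndef, Nat.cast_sub hJK]
  have hNge : x/(4*q) ≤ (Nn:ℝ) := by
    rw [hNcast]
    have heq : 3*x/(4*q) = 3 * (x/(4*q)) := by ring
    linarith
  have hNpos : (0:ℝ) < Nn := lt_of_lt_of_le (by positivity) hNge
  have hxN : x ≤ 4 * q * Nn := by
    rw [div_le_iff₀ (by positivity)] at hNge
    linarith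
  -- Deltaq control
  set B : ℝ := 2 ^ q.primeFactors.card with hBdef
  have hB0 : (0:ℝ) ≤ B := by positivity
  have habs_sub : ∀ u v : ℝ, |u - v| ≤ |u| + |v| := by
    intro u v
    calc |u - v| = |u + (-v)| := by ring_nf
      _ ≤ |u| + |(-v)| := abs_add_le u (-v)
      _ = |u| + |v| := by rw [abs_neg]
  have hnum_bound : ∀ y' : ℝ, ∀ b : ℤ, 0 ≤ y' → y' ≤ x →
      |AcalMod a y' q b - fq h q b / (q * gammaq h q) * (y' / x) * Acal a x|
        ≤ Acal a x + B / (q * gammaq h q) * Acal a x := by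
    intro y' b h1 h2
    have hX : |AcalMod a y' q b| ≤ Acal a x := by
      rw [abs_of_nonneg (acalmod_nonneg ha y' q b)]
      exact acalmod_le ha h2 q b
    have hY : |fq h q b / (q * gammaq h q) * (y' / x) * Acal a x|
        ≤ B / (q * gammaq h q) * Acal a x := by
      rw [abs_mul, abs_mul, abs_of_pos hA]
      have h01 : |fq h q b / (q * gammaq h q)| ≤ B / (q * gammaq h q) := by
        rw [abs_div, abs_of_pos (by positivity : (0:ℝ) < (q:ℝ) * gammaq h q)]
        apply div_le_div_of_nonneg_right ?_ (by positivity)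
        exact fq_abs_le hh q b
      have h02 : |y' / x| ≤ 1 := by
        rw [abs_of_nonneg (by positivity), div_le_one hx0]
        exact h2
      calc |fq h q b / (q * gammaq h q)| * |y' / x| * Acal a x
          ≤ (B / (q * gammaq h q)) * 1 * Acal a x := by
            apply mul_le_mul_of_nonneg_right ?_ hA.le
            apply mul_le_mul h01 h02 (abs_nonneg _) (by positivity)
        _ = B / (q * gammaq h q) * Acal a x := by ring
    calc |AcalMod a y' q b - fq h q b / (q * gammaq h q) * (y' / x) * Acal a x|
        ≤ |AcalMod a y' q b| + |fq h q b / (q * gammaq h q) * (y' / x) * Acal a x| :=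
          habs_sub _ _
      _ ≤ Acal a x + B / (q * gammaq h q) * Acal a x := add_le_add hX hY
  have hbddq : BddAbove {d : ℝ | ∃ y' : ℝ, ∃ b : ℤ, x / 4 ≤ y' ∧ y' ≤ x ∧
      d = |AcalMod a y' q b - fq h q b / (q * gammaq h q) * (y' / x) * Acal a x| /
        (Acal a x / (Nat.totient q : ℝ))} := by
    refine ⟨(Acal a x + B / (q * gammaq h q) * Acal a x) / (Acal a x / (Nat.totient q : ℝ)), ?_⟩
    rintro d ⟨y', b, h1, h2, rfl⟩
    apply div_le_div_of_nonneg_right ?_ (by positivity)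
    exact hnum_bound y' b (by linarith) h2
  have keyq : ∀ y' : ℝ, ∀ b : ℤ, x / 4 ≤ y' → y' ≤ x →
      |AcalMod a y' q b - fq h q b / (q * gammaq h q) * (y' / x) * Acal a x|
        ≤ Deltaq a h q x * (Acal a x / (Nat.totient q : ℝ)) := by
    intro y' b h1 h2
    have hmem : |AcalMod a y' q b - fq h q b / (q * gammaq h q) * (y' / x) * Acal a x| /
        (Acal a x / (Nat.totient q : ℝ)) ∈ {d : ℝ | ∃ y' : ℝ, ∃ b : ℤ, x / 4 ≤ y' ∧ y' ≤ x ∧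
        d = |AcalMod a y' q b - fq h q b / (q * gammaq h q) * (y' / x) * Acal a x| /
          (Acal a x / (Nat.totient q : ℝ))} := ⟨y', b, h1, h2, rfl⟩
    have hle := le_csSup hbddq hmem
    rw [div_le_iff₀ (by positivity : (0:ℝ) < Acal a x / (Nat.totient q : ℝ))] at hle
    exact hle
  have hDq0 : 0 ≤ Deltaq a h q x := by
    have hmem : |AcalMod a x q 0 - fq h q 0 / (q * gammaq h q) * (x / x) * Acal a x| /
        (Acal a x / (Nat.totient q : ℝ)) ∈ {d : ℝ | ∃ y' : ℝ, ∃ b : ℤ, x / 4 ≤ y' ∧ y' ≤ x ∧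
        d = |AcalMod a y' q b - fq h q b / (q * gammaq h q) * (y' / x) * Acal a x| /
          (Acal a x / (Nat.totient q : ℝ))} := ⟨x, 0, by linarith, le_refl x, rfl⟩
    exact le_trans (by positivity) (le_csSup hbddq hmem)
  -- DeltaTilde control
  have hbddt : BddAbove {d : ℝ | ∃ v : ℝ, x / 4 ≤ v ∧ v + (y:ℝ) ≤ x ∧
      d = |Acal a (v + (y:ℝ)) - Acal a v - (y:ℝ) * Acal a x / x| / ((y:ℝ) * Acal a x / x)} := by
    refine ⟨(Acal a x + Acal a x + (y:ℝ) * Acal a x / x) / ((y:ℝ) * Acal a x / x), ?_⟩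
    rintro d ⟨v, h1, h2, rfl⟩
    apply div_le_div_of_nonneg_right ?_ (by positivity)
    have hv1 : |Acal a (v + (y:ℝ))| ≤ Acal a x := by
      rw [abs_of_nonneg (acal_nonneg ha _)]
      exact acal_mono ha h2
    have hv2 : |Acal a v| ≤ Acal a x := by
      rw [abs_of_nonneg (acal_nonneg ha _)]
      exact acal_mono ha (by linarith)
    have hv3 : |(y:ℝ) * Acal a x / x| = (y:ℝ) * Acal a x / x := abs_of_pos (by positivity)
    calc |Acal a (v + (y:ℝ)) - Acal a v - (y:ℝ) * Acal a x / x|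
        ≤ |Acal a (v + (y:ℝ)) - Acal a v| + |(y:ℝ) * Acal a x / x| := habs_sub _ _
      _ ≤ (|Acal a (v + (y:ℝ))| + |Acal a v|) + |(y:ℝ) * Acal a x / x| :=
          add_le_add_left (habs_sub _ _) _
      _ ≤ Acal a x + Acal a x + (y:ℝ) * Acal a x / x := by
          rw [hv3]; exact add_le_add_left (add_le_add hv1 hv2) _
  have keyt : ∀ v : ℝ, x / 4 ≤ v → v + (y:ℝ) ≤ x →
      |Acal a (v + (y:ℝ)) - Acal a v - (y:ℝ) * Acal a x / x|
        ≤ DeltaTilde a (y:ℝ) x * ((y:ℝ) * Acal a x / x) := by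
    intro v h1 h2
    have hmem : |Acal a (v + (y:ℝ)) - Acal a v - (y:ℝ) * Acal a x / x| /
        ((y:ℝ) * Acal a x / x) ∈ {d : ℝ | ∃ v : ℝ, x / 4 ≤ v ∧ v + (y:ℝ) ≤ x ∧
        d = |Acal a (v + (y:ℝ)) - Acal a v - (y:ℝ) * Acal a x / x| / ((y:ℝ) * Acal a x / x)} :=
      ⟨v, h1, h2, rfl⟩
    have hle := le_csSup hbddt hmem
    rw [div_le_iff₀ (by positivity : (0:ℝ) < (y:ℝ) * Acal a x / x)] at hle
    exact hle
  have hDt0 : 0 ≤ DeltaTilde a (y:ℝ) x := by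
    have hmem : |Acal a (x/4 + (y:ℝ)) - Acal a (x/4) - (y:ℝ) * Acal a x / x| /
        ((y:ℝ) * Acal a x / x) ∈ {d : ℝ | ∃ v : ℝ, x / 4 ≤ v ∧ v + (y:ℝ) ≤ x ∧
        d = |Acal a (v + (y:ℝ)) - Acal a v - (y:ℝ) * Acal a x / x| / ((y:ℝ) * Acal a x / x)} :=
      ⟨x/4, le_refl _, by linarith, rfl⟩
    exact le_trans (by positivity) (le_csSup hbddt hmem)
  -- the key identity
  have key_id : ∑ s ∈ Finset.Icc 1 y,
        (AcalMod a ((K₂ * q + s : ℕ) : ℝ) q (s:ℤ) - AcalMod a ((J * q + s : ℕ) : ℝ) q (s:ℤ))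
      = ∑ k ∈ Finset.Icc (J + 1) K₂,
        (Acal a ((k * q + y : ℕ) : ℝ) - Acal a ((k * q : ℕ) : ℝ)) := by
    calc ∑ s ∈ Finset.Icc 1 y,
          (AcalMod a ((K₂ * q + s : ℕ) : ℝ) q (s:ℤ) - AcalMod a ((J * q + s : ℕ) : ℝ) q (s:ℤ))
        = ∑ s ∈ Finset.Icc 1 y, ∑ k ∈ Finset.Icc (J + 1) K₂, a (k * q + s) := by
          apply Finset.sum_congr rfl
          intro s hs
          exact acalmod_diff' a hq (Finset.mem_Icc.mp hs).1 hJK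
      _ = ∑ k ∈ Finset.Icc (J + 1) K₂, ∑ s ∈ Finset.Icc 1 y, a (k * q + s) :=
          Finset.sum_comm
      _ = ∑ k ∈ Finset.Icc (J + 1) K₂,
          (Acal a ((k * q + y : ℕ) : ℝ) - Acal a ((k * q : ℕ) : ℝ)) := by
          apply Finset.sum_congr rfl
          intro k _
          exact (acal_diff' a (k * q) y).symm
  -- abbreviations
  set A := Acal a x with hAdef
  set γ := gammaq h q with hgdef
  set Φ := (Nat.totient q : ℝ) with hPhidef
  set Dq := Deltaq a h q x with hDqdef
  set Dt := DeltaTilde a (y:ℝ) x with hDtdef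
  set P := ∑ s ∈ Finset.Icc 1 y, fq h q (s:ℤ) with hPdef
  set C : ℝ := (Nn:ℝ) * (q:ℝ) * A / ((q:ℝ) * γ * x) with hCdef
  set R : ℝ := (Nn:ℝ) * ((y:ℝ) * A / x) with hRdef
  have hRpos : 0 < R := by
    rw [hRdef]; exact mul_pos hNpos (by positivity)
  have hJKr : (J:ℝ) ≤ (K₂:ℝ) := by exact_mod_cast hJK
  have hcast1 : ∀ m s' : ℕ, ((m * q + s' : ℕ) : ℝ) = (m:ℝ) * (q:ℝ) + (s':ℝ) := by
    intro m s'; push_cast; ring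
  -- per-s estimate
  have per_s : ∀ s ∈ Finset.Icc 1 y,
      |(AcalMod a ((K₂ * q + s : ℕ) : ℝ) q (s:ℤ) - AcalMod a ((J * q + s : ℕ) : ℝ) q (s:ℤ))
        - fq h q (s:ℤ) * C| ≤ 2 * (Dq * (A / Φ)) := by
    intro s hs
    obtain ⟨hs1, hs2⟩ := Finset.mem_Icc.mp hs
    have hs1' : (1:ℝ) ≤ (s:ℝ) := by exact_mod_cast hs1
    have hs2' : (s:ℝ) ≤ (y:ℝ) := by exact_mod_cast hs2
    have hJKq : (J:ℝ) * q ≤ (K₂:ℝ) * q := mul_le_mul_of_nonneg_right hJKr hq0.le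
    have hu1low : x/4 ≤ ((J * q + s : ℕ) : ℝ) := by rw [hcast1]; linarith
    have hu2hi : ((K₂ * q + s : ℕ) : ℝ) ≤ x := by rw [hcast1]; linarith
    have hu1hi : ((J * q + s : ℕ) : ℝ) ≤ x := by rw [hcast1]; linarith
    have hu2low : x/4 ≤ ((K₂ * q + s : ℕ) : ℝ) := by rw [hcast1]; linarith
    have b2 := keyq ((K₂ * q + s : ℕ) : ℝ) (s:ℤ) hu2low hu2hi
    have b1 := keyq ((J * q + s : ℕ) : ℝ) (s:ℤ) hu1low hu1hi
    have hM : fq h q (s:ℤ) * C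
        = fq h q (s:ℤ) / ((q:ℝ) * γ) * (((K₂ * q + s : ℕ) : ℝ) / x) * A
          - fq h q (s:ℤ) / ((q:ℝ) * γ) * (((J * q + s : ℕ) : ℝ) / x) * A := by
      have hu : ((K₂ * q + s : ℕ) : ℝ) - ((J * q + s : ℕ) : ℝ) = (Nn:ℝ) * q := by
        rw [hcast1, hcast1, hNcast]; ring
      have expand : ∀ f u v : ℝ, f / ((q:ℝ) * γ) * (u / x) * A - f / ((q:ℝ) * γ) * (v / x) * A
          = f * ((u - v) * A / (((q:ℝ) * γ) * x)) := by
        intros; ring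
      rw [expand, hu, hCdef]
    have harg : (AcalMod a ((K₂ * q + s : ℕ) : ℝ) q (s:ℤ)
          - AcalMod a ((J * q + s : ℕ) : ℝ) q (s:ℤ)) - fq h q (s:ℤ) * C
        = (AcalMod a ((K₂ * q + s : ℕ) : ℝ) q (s:ℤ)
            - fq h q (s:ℤ) / ((q:ℝ) * γ) * (((K₂ * q + s : ℕ) : ℝ) / x) * A)
          - (AcalMod a ((J * q + s : ℕ) : ℝ) q (s:ℤ)
            - fq h q (s:ℤ) / ((q:ℝ) * γ) * (((J * q + s : ℕ) : ℝ) / x) * A) := by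
      rw [hM]; ring
    rw [harg]
    calc _ ≤ _ := habs_sub _ _
      _ ≤ Dq * (A / Φ) + Dq * (A / Φ) := add_le_add b2 b1
      _ = 2 * (Dq * (A / Φ)) := by ring
  have est1 : |(∑ s ∈ Finset.Icc 1 y,
        (AcalMod a ((K₂ * q + s : ℕ) : ℝ) q (s:ℤ) - AcalMod a ((J * q + s : ℕ) : ℝ) q (s:ℤ)))
      - P * C| ≤ (y:ℝ) * (2 * (Dq * (A / Φ))) := by
    have h1 : (∑ s ∈ Finset.Icc 1 y,
          (AcalMod a ((K₂ * q + s : ℕ) : ℝ) q (s:ℤ) - AcalMod a ((J * q + s : ℕ) : ℝ) q (s:ℤ)))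
        - P * C = ∑ s ∈ Finset.Icc 1 y,
          ((AcalMod a ((K₂ * q + s : ℕ) : ℝ) q (s:ℤ) - AcalMod a ((J * q + s : ℕ) : ℝ) q (s:ℤ))
            - fq h q (s:ℤ) * C) := by
      simp only [Finset.sum_sub_distrib, hPdef, Finset.sum_mul]
    rw [h1]
    refine (Finset.abs_sum_le_sum_abs _ _).trans ?_
    refine (Finset.sum_le_sum per_s).trans ?_
    rw [Finset.sum_const, Nat.card_Icc, nsmul_eq_mul]
    have hyy : y + 1 - 1 = y := by omega
    rw [hyy]
  -- per-k estimate
  have per_k : ∀ k ∈ Finset.Icc (J + 1) K₂,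
      |(Acal a ((k * q + y : ℕ) : ℝ) - Acal a ((k * q : ℕ) : ℝ)) - (y:ℝ) * A / x|
        ≤ Dt * ((y:ℝ) * A / x) := by
    intro k hk
    obtain ⟨hk1, hk2⟩ := Finset.mem_Icc.mp hk
    have hk1' : (J:ℝ) ≤ (k:ℝ) := by exact_mod_cast Nat.le_of_succ_le hk1
    have hk2' : (k:ℝ) ≤ (K₂:ℝ) := by exact_mod_cast hk2
    have hcast2 : ((k * q : ℕ) : ℝ) = (k:ℝ) * (q:ℝ) := by push_cast; ring
    have hv1 : x/4 ≤ ((k * q : ℕ) : ℝ) := by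
      rw [hcast2]
      linarith [mul_le_mul_of_nonneg_right hk1' hq0.le]
    have hv2 : ((k * q : ℕ) : ℝ) + (y:ℝ) ≤ x := by
      rw [hcast2]
      linarith [mul_le_mul_of_nonneg_right hk2' hq0.le]
    have hcongr : Acal a (((k * q : ℕ) : ℝ) + (y:ℝ)) = Acal a ((k * q + y : ℕ) : ℝ) := by
      congr 1; rw [hcast2, hcast1]
    have := keyt ((k * q : ℕ) : ℝ) hv1 hv2
    rw [hcongr] at this
    exact this
  have hcard : (Finset.Icc (J + 1) K₂).card = Nn := by
    rw [Nat.card_Icc]; omega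
  have est2 : |(∑ k ∈ Finset.Icc (J + 1) K₂,
        (Acal a ((k * q + y : ℕ) : ℝ) - Acal a ((k * q : ℕ) : ℝ))) - (Nn:ℝ) * ((y:ℝ) * A / x)|
      ≤ (Nn:ℝ) * (Dt * ((y:ℝ) * A / x)) := by
    have h1 : (∑ k ∈ Finset.Icc (J + 1) K₂,
          (Acal a ((k * q + y : ℕ) : ℝ) - Acal a ((k * q : ℕ) : ℝ))) - (Nn:ℝ) * ((y:ℝ) * A / x)
        = ∑ k ∈ Finset.Icc (J + 1) K₂,
          ((Acal a ((k * q + y : ℕ) : ℝ) - Acal a ((k * q : ℕ) : ℝ)) - (y:ℝ) * A / x) := by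
      simp only [Finset.sum_sub_distrib, Finset.sum_const, hcard, nsmul_eq_mul]
    rw [h1]
    refine (Finset.abs_sum_le_sum_abs _ _).trans ?_
    refine (Finset.sum_le_sum per_k).trans ?_
    rw [Finset.sum_const, hcard, nsmul_eq_mul]
  -- combine
  have comb : |P * C - R| ≤ (y:ℝ) * (2 * (Dq * (A / Φ))) + (Nn:ℝ) * (Dt * ((y:ℝ) * A / x)) := by
    have hsplit : P * C - R
        = -((∑ s ∈ Finset.Icc 1 y,
            (AcalMod a ((K₂ * q + s : ℕ) : ℝ) q (s:ℤ) - AcalMod a ((J * q + s : ℕ) : ℝ) q (s:ℤ)))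
            - P * C)
          + ((∑ k ∈ Finset.Icc (J + 1) K₂,
            (Acal a ((k * q + y : ℕ) : ℝ) - Acal a ((k * q : ℕ) : ℝ)))
            - (Nn:ℝ) * ((y:ℝ) * A / x)) := by
      rw [← key_id, hRdef]; ring
    rw [hsplit]
    refine (abs_add_le _ _).trans ?_
    rw [abs_neg]
    exact add_le_add est1 est2
  -- final algebra
  have hid : (1 / (γ * (y:ℝ)) * P - 1) * R = P * C - R := by
    rw [hCdef, hRdef]
    field_simp
  have h8 : (y:ℝ) * (2 * (Dq * (A / Φ))) ≤ (8 * ((q:ℝ) / Φ) * Dq) * R := by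
    have e1 : (y:ℝ) * (2 * (Dq * (A / Φ))) = (2 * x) * ((y:ℝ) * Dq * A / (Φ * x)) := by
      field_simp
    have e2 : (8 * ((q:ℝ) / Φ) * Dq) * R = (8 * (q:ℝ) * (Nn:ℝ)) * ((y:ℝ) * Dq * A / (Φ * x)) := by
      rw [hRdef]
      field_simp
    rw [e1, e2]
    apply mul_le_mul_of_nonneg_right (by linarith) ?_
    have : 0 ≤ (y:ℝ) * Dq * A := by positivity
    positivity
  have h9 : (Nn:ℝ) * (Dt * ((y:ℝ) * A / x)) = Dt * R := by rw [hRdef]; ring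
  have habs2 : |1 / (γ * (y:ℝ)) * P - 1| * R ≤ (8 * ((q:ℝ) / Φ) * Dq + Dt) * R := by
    calc |1 / (γ * (y:ℝ)) * P - 1| * R = |(1 / (γ * (y:ℝ)) * P - 1) * R| := by
          rw [abs_mul, abs_of_pos hRpos]
      _ = |P * C - R| := by rw [hid]
      _ ≤ (y:ℝ) * (2 * (Dq * (A / Φ))) + (Nn:ℝ) * (Dt * ((y:ℝ) * A / x)) := comb
      _ ≤ (8 * ((q:ℝ) / Φ) * Dq) * R + Dt * R := by rw [← h9]; exact add_le_add_left h8 _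
      _ = (8 * ((q:ℝ) / Φ) * Dq + Dt) * R := by ring
  have hfin : |1 / (γ * (y:ℝ)) * P - 1| ≤ 8 * ((q:ℝ) / Φ) * Dq + Dt :=
    le_of_mul_le_mul_right habs2 hRpos
  have hqd : 0 ≤ ((q:ℝ) / Φ) * Dq := mul_nonneg (by positivity) hDq0
  linarith
end
end

section
/- For every ξ with 1 ≤ ξ ≤ (2/3)·log z we have |E(u)| ≤ exp(H(ξ) − ξ·u + 5·J(ξ)) for every u ≥ 0, and ∫₀^∞ e^{ξ·u}·|E(u)| du ≤ (3/ξ)·exp(H(ξ) + 5·J(ξ)). -/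
open scoped Classical

noncomputable section

/-- `G_q(1) = ∏_{p | q} (1 - 1/p)(1 + f(p)/p + f(p²)/p² + …)`. -/
def Gq (f : ℕ → ℝ) (q : ℕ) : ℝ :=
  ∏ p ∈ q.primeFactors, ((1 - 1 / (p : ℝ)) * ∑' k : ℕ, f (p ^ k) / (p : ℝ) ^ k)

/-- `E(u) = z^{-u} Σ_{n ≤ z^u} (f(n) - G_q(1))`. -/
def Efun (f : ℕ → ℝ) (q : ℕ) (z u : ℝ) : ℝ :=
  z ^ (-u) * ∑ n ∈ Finset.Icc 1 ⌊z ^ u⌋₊, (f n - Gq f q)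

/-- `H_j(ξ) = Σ_{p | q} ((1 - f(p))/p) p^{ξ/log z} (log(z/p)/log z)^j`. -/
def Hfun (f : ℕ → ℝ) (q : ℕ) (z : ℝ) (j : ℕ) (ξ : ℝ) : ℝ :=
  ∑ p ∈ q.primeFactors,
    (1 - f p) / (p : ℝ) * (p : ℝ) ^ (ξ / Real.log z) *
      (Real.log (z / (p : ℝ)) / Real.log z) ^ j

/-- `J(ξ) = Σ_{p | q} p^{-2} p^{2ξ/log z}`. -/
def Jfun (q : ℕ) (z ξ : ℝ) : ℝ :=
  ∑ p ∈ q.primeFactors, (p : ℝ) ^ (2 * ξ / Real.log z) / (p : ℝ) ^ 2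

open MeasureTheory

open ArithmeticFunction Set

/-- auxiliary arithmetic function version of `f`. -/
private def Ff (f : ℕ → ℝ) : ArithmeticFunction ℝ :=
  ⟨fun n => if n = 0 then 0 else f n, if_pos rfl⟩

private lemma Ff_apply (f : ℕ → ℝ) {n : ℕ} (hn : n ≠ 0) : Ff f n = f n := by
  simp [Ff, hn]

private lemma Ff_mult (f : ℕ → ℝ) (hf1 : f 1 = 1)
    (hfmul : ∀ m n : ℕ, Nat.Coprime m n → f (m * n) = f m * f n) :
    (Ff f).IsMultiplicative := by
  constructor
  · simpa [Ff] using hf1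
  · intro m n hmn
    rcases eq_or_ne m 0 with rfl | hm
    · have : n = 1 := by simpa using hmn
      subst this; simp [Ff]
    rcases eq_or_ne n 0 with rfl | hn
    · have : m = 1 := by simpa [Nat.coprime_zero_right] using hmn
      subst this; simp [Ff]
    rw [Ff_apply f (Nat.mul_ne_zero hm hn), Ff_apply f hm, Ff_apply f hn]
    exact hfmul m n hmn

/-- `g = μ ⋆ f` (Dirichlet convolution). -/
private def gg (f : ℕ → ℝ) : ArithmeticFunction ℝ :=
  ((moebius : ArithmeticFunction ℤ) : ArithmeticFunction ℝ) * Ff f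

private lemma gg_mult (f : ℕ → ℝ) (hf1 : f 1 = 1)
    (hfmul : ∀ m n : ℕ, Nat.Coprime m n → f (m * n) = f m * f n) :
    (gg f).IsMultiplicative :=
  (isMultiplicative_moebius.intCast).mul (Ff_mult f hf1 hfmul)

private lemma gg_one (f : ℕ → ℝ) (hf1 : f 1 = 1) : gg f 1 = 1 := by
  rw [gg, ArithmeticFunction.mul_apply]
  simp [Nat.divisorsAntidiagonal_one, Ff, hf1]

private lemma sum_divisors_gg (f : ℕ → ℝ) {n : ℕ} (hn : n ≠ 0) :
    ∑ d ∈ n.divisors, gg f d = f n := by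
  have h1 : (∑ d ∈ n.divisors, gg f d) = (((zeta : ArithmeticFunction ℕ) : ArithmeticFunction ℝ) * gg f) n :=
    (coe_zeta_mul_apply).symm
  rw [h1, gg, ← mul_assoc, coe_zeta_mul_coe_moebius, one_mul, Ff_apply f hn]

private lemma gg_prime_pow (f : ℕ → ℝ) {p : ℕ} (hp : p.Prime) (k : ℕ) :
    gg f (p ^ (k + 1)) = f (p ^ (k + 1)) - f (p ^ k) := by
  have hp0 : p ≠ 0 := hp.ne_zero
  rw [gg, ArithmeticFunction.mul_apply, Nat.sum_divisorsAntidiagonal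
    (fun a b => ((moebius : ArithmeticFunction ℤ) : ArithmeticFunction ℝ) a * Ff f b),
    Nat.sum_divisors_prime_pow hp]
  have hdiv : ∀ i : ℕ, i ≤ k + 1 → p ^ (k + 1) / p ^ i = p ^ (k + 1 - i) := by
    intro i hi
    exact Nat.pow_div hi hp.pos
  rw [Finset.sum_range_succ', Finset.sum_range_succ']
  have h0 : ∀ i : ℕ,
      ((moebius : ArithmeticFunction ℤ) : ArithmeticFunction ℝ) (p ^ (i + 1 + 1)) *
        Ff f (p ^ (k + 1) / p ^ (i + 1 + 1)) = 0 := by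
    intro i
    have : moebius (p ^ (i + 1 + 1)) = 0 := by
      rw [moebius_apply_prime_pow hp (by omega)]
      simp [show ¬ (i + 1 + 1 = 1) by omega]
    simp [intCoe_apply, this]
  simp only [h0, Finset.sum_const_zero, zero_add]
  rw [hdiv 1 (by omega), hdiv 0 (by omega)]
  have hμ1 : moebius (p ^ 1) = -1 := by
    rw [moebius_apply_prime_pow hp (by omega)]; simp
  have hμ0 : ((moebius : ArithmeticFunction ℤ) : ArithmeticFunction ℝ) 1 = 1 := by
    simp
  rw [pow_one] at hμ1 ⊢
  rw [Ff_apply f (pow_ne_zero _ hp0), Ff_apply f (pow_ne_zero _ hp0)]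
  simp [intCoe_apply, hμ1, hμ0]
  ring

private lemma gg_abs_le (f : ℕ → ℝ) (hfb : ∀ n, 0 ≤ f n ∧ f n ≤ 1) {p : ℕ}
    (hp : p.Prime) (k : ℕ) : |gg f (p ^ (k + 1))| ≤ 1 := by
  rw [gg_prime_pow f hp k]
  have h1 := hfb (p ^ (k + 1)); have h2 := hfb (p ^ k)
  rw [abs_le]; constructor <;> linarith [h1.1, h1.2, h2.1, h2.2]

private lemma gg_abs_pow_le (f : ℕ → ℝ) (hf1 : f 1 = 1)
    (hfb : ∀ n, 0 ≤ f n ∧ f n ≤ 1) {p : ℕ} (hp : p.Prime) (k : ℕ) :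
    |gg f (p ^ k)| ≤ 1 := by
  cases k with
  | zero => simp [gg_one f hf1]
  | succ k => exact gg_abs_le f hfb hp k

private lemma gg_smooth_zero (f : ℕ → ℝ) (q : ℕ) (hq : 0 < q) (hf1 : f 1 = 1)
    (hfmul : ∀ m n : ℕ, Nat.Coprime m n → f (m * n) = f m * f n)
    (hfout : ∀ p k : ℕ, Nat.Prime p → ¬ p ∣ q → 1 ≤ k → f (p ^ k) = 1)
    {d : ℕ} (hd : d ≠ 0) (hds : d ∉ Nat.factoredNumbers q.primeFactors) :
    gg f d = 0 := by
  rw [Nat.mem_factoredNumbers'] at hds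
  push_neg at hds
  obtain ⟨p, hp, hpd, hps⟩ := hds
  have hpq : ¬ p ∣ q := fun h => hps (Nat.mem_primeFactors.mpr ⟨hp, h, hq.ne'⟩)
  -- write d = p ^ k * m with p ∤ m
  have hk : ∃ kk, kk = d.factorization p := ⟨_, rfl⟩
  obtain ⟨k, hk⟩ := hk
  have hk1 : 1 ≤ k := hk ▸ (hp.factorization_pos_of_dvd hd hpd)
  have hco : Nat.Coprime (p ^ k) (d / p ^ k) := by
    rw [hk]; exact Nat.Coprime.pow_left _ (Nat.coprime_ordCompl hp hd)
  have hdeq : p ^ k * (d / p ^ k) = d := by rw [hk]; exact Nat.ordProj_mul_ordCompl_eq_self d p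
  have hmul := (gg_mult f hf1 hfmul).map_mul_of_coprime hco
  rw [hdeq] at hmul
  have hgp : gg f (p ^ k) = 0 := by
    obtain ⟨k', hk'⟩ : ∃ k', k = k' + 1 := ⟨k - 1, by omega⟩
    rw [hk']
    rw [gg_prime_pow f hp k']
    have h1 : f (p ^ (k' + 1)) = 1 := hfout p (k' + 1) hp hpq (by omega)
    have h2 : f (p ^ k') = 1 := by
      cases k' with
      | zero => simpa using hf1
      | succ j => exact hfout p (j + 1) hp hpq (by omega)
    rw [h1, h2]; ring
  rw [hmul, hgp, zero_mul]

private lemma summable_of_abs_le_geom {a : ℕ → ℝ} {t : ℝ} (ht0 : 0 ≤ t) (ht1 : t < 1)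
    (h : ∀ k, |a k| ≤ t ^ k) : Summable a :=
  Summable.of_norm_bounded (summable_geometric_of_lt_one ht0 ht1) (by simpa using h)

private lemma summable_f_geom (f : ℕ → ℝ) (hfb : ∀ n, 0 ≤ f n ∧ f n ≤ 1) {p : ℕ}
    (hp : p.Prime) : Summable (fun k : ℕ => f (p ^ k) / (p : ℝ) ^ k) := by
  have hp1 : (1 : ℝ) < p := by exact_mod_cast hp.one_lt
  refine summable_of_abs_le_geom (t := 1 / (p : ℝ)) (by positivity)
    ((div_lt_one (by linarith)).mpr hp1) (fun k => ?_)
  rw [div_pow, one_pow, abs_div, abs_of_nonneg (by positivity : (0:ℝ) ≤ (p:ℝ)^k)]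
  gcongr
  rw [abs_of_nonneg (hfb _).1]; exact (hfb _).2

private lemma summable_gg_geom (f : ℕ → ℝ) (hf1 : f 1 = 1)
    (hfb : ∀ n, 0 ≤ f n ∧ f n ≤ 1) {p : ℕ} (hp : p.Prime) :
    Summable (fun k : ℕ => gg f (p ^ k) / (p : ℝ) ^ k) := by
  have hp1 : (1 : ℝ) < p := by exact_mod_cast hp.one_lt
  refine summable_of_abs_le_geom (t := 1 / (p : ℝ)) (by positivity)
    ((div_lt_one (by linarith)).mpr hp1) (fun k => ?_)
  rw [div_pow, one_pow, abs_div, abs_of_nonneg (by positivity : (0:ℝ) ≤ (p:ℝ)^k)]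
  gcongr
  exact gg_abs_pow_le f hf1 hfb hp k

private lemma Summable.shift {a : ℕ → ℝ} (hs : Summable a) :
    Summable (fun k : ℕ => a (k + 1)) := by
  simpa [Function.comp_def] using hs.comp_injective (add_left_injective 1)

private lemma gg_euler_factor (f : ℕ → ℝ) (hf1 : f 1 = 1)
    (hfb : ∀ n, 0 ≤ f n ∧ f n ≤ 1) {p : ℕ} (hp : p.Prime) :
    ∑' k : ℕ, gg f (p ^ k) / (p : ℝ) ^ k
      = (1 - 1 / (p : ℝ)) * ∑' k : ℕ, f (p ^ k) / (p : ℝ) ^ k := by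
  have hp0 : (0 : ℝ) < p := by exact_mod_cast hp.pos
  have hsf := summable_f_geom f hfb hp
  have hsg := summable_gg_geom f hf1 hfb hp
  have h1 : ∑' k : ℕ, gg f (p ^ k) / (p : ℝ) ^ k
      = 1 + ∑' k : ℕ, (f (p ^ (k + 1)) / (p : ℝ) ^ (k + 1) - f (p ^ k) / (p : ℝ) ^ (k + 1)) := by
    rw [Summable.tsum_eq_zero_add hsg]
    congr 1
    · simp [gg_one f hf1]
    · apply tsum_congr; intro k
      rw [gg_prime_pow f hp k]; ring
  have hs1 : Summable (fun k : ℕ => f (p ^ (k + 1)) / (p : ℝ) ^ (k + 1)) := hsf.shift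
  have hs2 : Summable (fun k : ℕ => f (p ^ k) / (p : ℝ) ^ (k + 1)) := by
    apply hsf.div_const (p : ℝ) |>.congr
    intro k; rw [pow_succ]; ring
  rw [h1, Summable.tsum_sub hs1 hs2]
  have h2 : ∑' k : ℕ, f (p ^ (k + 1)) / (p : ℝ) ^ (k + 1)
      = (∑' k : ℕ, f (p ^ k) / (p : ℝ) ^ k) - 1 := by
    rw [Summable.tsum_eq_zero_add hsf]; simp [hf1]
  have h3 : ∑' k : ℕ, f (p ^ k) / (p : ℝ) ^ (k + 1)
      = (1 / (p : ℝ)) * ∑' k : ℕ, f (p ^ k) / (p : ℝ) ^ k := by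
    rw [← tsum_mul_left]
    apply tsum_congr; intro k; rw [pow_succ]; ring
  rw [h2, h3]; ring

private lemma gg_factor_bound (f : ℕ → ℝ) (hf1 : f 1 = 1)
    (hfb : ∀ n, 0 ≤ f n ∧ f n ≤ 1) {p : ℕ} (hp : p.Prime) {t : ℝ}
    (ht0 : 0 ≤ t) (ht : t ≤ 4 / 5) :
    ∑' k : ℕ, |gg f (p ^ k)| * t ^ k ≤ 1 + (1 - f p) * t + 5 * t ^ 2 := by
  have ht1 : t < 1 := by linarith
  have hs : Summable (fun k : ℕ => |gg f (p ^ k)| * t ^ k) := by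
    refine summable_of_abs_le_geom ht0 ht1 (fun k => ?_)
    rw [abs_mul, abs_abs, abs_of_nonneg (pow_nonneg ht0 k)]
    nlinarith [gg_abs_pow_le f hf1 hfb hp k, pow_nonneg ht0 k, abs_nonneg (gg f (p ^ k))]
  rw [Summable.tsum_eq_zero_add hs, Summable.tsum_eq_zero_add hs.shift]
  have e0 : |gg f (p ^ 0)| * t ^ 0 = 1 := by simp [gg_one f hf1]
  have e1 : |gg f (p ^ (0 + 1))| * t ^ (0 + 1) = (1 - f p) * t := by
    rw [gg_prime_pow f hp 0]
    have h := hfb p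
    rw [pow_one, pow_one, pow_zero, hf1]
    rw [abs_of_nonpos (by linarith [h.2])]
    ring
  rw [e0, e1]
  have htail : ∑' k : ℕ, |gg f (p ^ (k + 1 + 1))| * t ^ (k + 1 + 1) ≤ 5 * t ^ 2 := by
    have hmaj : ∀ k : ℕ, |gg f (p ^ (k + 1 + 1))| * t ^ (k + 1 + 1) ≤ t ^ 2 * t ^ k := by
      intro k
      have := gg_abs_pow_le f hf1 hfb hp (k + 1 + 1)
      calc |gg f (p ^ (k + 1 + 1))| * t ^ (k + 1 + 1) ≤ 1 * t ^ (k + 1 + 1) := by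
            apply mul_le_mul_of_nonneg_right this (by positivity)
        _ = t ^ 2 * t ^ k := by ring
    calc ∑' k : ℕ, |gg f (p ^ (k + 1 + 1))| * t ^ (k + 1 + 1)
        ≤ ∑' k : ℕ, t ^ 2 * t ^ k := by
          apply Summable.tsum_le_tsum hmaj hs.shift.shift
            ((summable_geometric_of_lt_one ht0 ht1).mul_left _)
      _ = t ^ 2 * (1 - t)⁻¹ := by rw [tsum_mul_left, tsum_geometric_of_lt_one ht0 ht1]
      _ ≤ 5 * t ^ 2 := by
          rw [mul_comm]
          apply mul_le_mul_of_nonneg_right _ (by positivity)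
          rw [← one_div, div_le_iff₀ (by linarith : (0:ℝ) < 1 - t)]
          linarith
  linarith [htail]

section EP
variable (f : ℕ → ℝ) (q : ℕ) (hq : 0 < q) (hf1 : f 1 = 1)
    (hfmul : ∀ m n : ℕ, Nat.Coprime m n → f (m * n) = f m * f n)
    (hfout : ∀ p k : ℕ, Nat.Prime p → ¬ p ∣ q → 1 ≤ k → f (p ^ k) = 1)
    (hfb : ∀ n, 0 ≤ f n ∧ f n ≤ 1)

include hq hf1 hfmul hfout hfb in
private lemma hasSum_W1 : HasSum (fun d : ℕ => gg f d / (d : ℝ)) (Gq f q) := by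
  set W : ℕ → ℝ := fun d => gg f d / (d : ℝ) with hW
  have hW1 : W 1 = 1 := by simp [hW, gg_one f hf1]
  have hWmul : ∀ {m n : ℕ}, Nat.Coprime m n → W (m * n) = W m * W n := by
    intro m n hmn
    rcases eq_or_ne m 0 with rfl | hm
    · simp [hW]
    rcases eq_or_ne n 0 with rfl | hn
    · simp [hW]
    have := (gg_mult f hf1 hfmul).map_mul_of_coprime hmn
    simp only [hW, this]
    push_cast
    field_simp
  have hsum : ∀ {p : ℕ}, p.Prime → Summable (fun n : ℕ => ‖W (p ^ n)‖) := by
    intro p hp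
    have hp1 : (1 : ℝ) < p := by exact_mod_cast hp.one_lt
    refine summable_of_abs_le_geom (t := 1 / (p : ℝ)) (by positivity)
      ((div_lt_one (by linarith)).mpr hp1) (fun k => ?_)
    simp only [hW, Real.norm_eq_abs, abs_abs, Nat.cast_pow]
    rw [div_pow, one_pow, abs_div, abs_of_nonneg (by positivity : (0:ℝ) ≤ (p:ℝ)^k)]
    gcongr
    exact gg_abs_pow_le f hf1 hfb hp k
  have key := (EulerProduct.summable_and_hasSum_factoredNumbers_prod_filter_prime_tsum
    hW1 hWmul hsum q.primeFactors).2
  have hfilter : {p ∈ q.primeFactors | p.Prime} = q.primeFactors :=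
    Finset.filter_true_of_mem (fun p hp => Nat.prime_of_mem_primeFactors hp)
  rw [hfilter] at key
  have hprod : (∏ p ∈ q.primeFactors, ∑' n : ℕ, W (p ^ n)) = Gq f q := by
    apply Finset.prod_congr rfl
    intro p hp
    have hpp := Nat.prime_of_mem_primeFactors hp
    have : (fun n : ℕ => W (p ^ n)) = fun n : ℕ => gg f (p ^ n) / (p : ℝ) ^ n := by
      funext n; simp [hW]
    rw [this, gg_euler_factor f hf1 hfb hpp]
  rw [hprod] at key
  have hsupp : Function.support W ⊆ Nat.factoredNumbers q.primeFactors := by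
    intro d hd
    by_contra hds
    rcases eq_or_ne d 0 with rfl | hd0
    · apply hd; simp [hW]
    · apply hd; simp [hW, gg_smooth_zero f q hq hf1 hfmul hfout hd0 hds]
  exact (hasSum_subtype_iff_of_support_subset hsupp).mp key

include hq hf1 hfmul hfout hfb in
private lemma hasSum_W2 {c : ℝ} (hcneg : c < 0) :
    HasSum (fun d : ℕ => |gg f d| * (d : ℝ) ^ c)
      (∏ p ∈ q.primeFactors, ∑' k : ℕ, |gg f (p ^ k)| * ((p : ℝ) ^ c) ^ k) := by
  set W : ℕ → ℝ := fun d => |gg f d| * (d : ℝ) ^ c with hW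
  have hW1 : W 1 = 1 := by simp [hW, gg_one f hf1]
  have hWmul : ∀ {m n : ℕ}, Nat.Coprime m n → W (m * n) = W m * W n := by
    intro m n hmn
    rcases eq_or_ne m 0 with rfl | hm
    · simp [hW]
    rcases eq_or_ne n 0 with rfl | hn
    · simp [hW]
    have := (gg_mult f hf1 hfmul).map_mul_of_coprime hmn
    simp only [hW, this, abs_mul, Nat.cast_mul]
    rw [Real.mul_rpow (by positivity) (by positivity)]
    ring
  have hpowW : ∀ {p : ℕ}, p.Prime → ∀ k : ℕ, W (p ^ k) = |gg f (p ^ k)| * ((p : ℝ) ^ c) ^ k := by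
    intro p hp k
    have hp0 : (0:ℝ) ≤ p := by positivity
    simp only [hW, Nat.cast_pow]
    rw [← Real.rpow_natCast ((p:ℝ) ^ c) k, ← Real.rpow_natCast (p:ℝ) k,
      ← Real.rpow_mul hp0, ← Real.rpow_mul hp0, mul_comm c (k:ℝ)]
  have hsum : ∀ {p : ℕ}, p.Prime → Summable (fun n : ℕ => ‖W (p ^ n)‖) := by
    intro p hp
    have hp1 : (1 : ℝ) < p := by exact_mod_cast hp.one_lt
    have ht0 : (0:ℝ) ≤ (p:ℝ) ^ c := Real.rpow_nonneg (by positivity) c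
    have ht1 : (p:ℝ) ^ c < 1 := Real.rpow_lt_one_of_one_lt_of_neg hp1 hcneg
    refine summable_of_abs_le_geom ht0 ht1 (fun k => ?_)
    rw [Real.norm_eq_abs, abs_abs, hpowW hp k, abs_mul, abs_abs,
      abs_of_nonneg (pow_nonneg ht0 k)]
    nlinarith [gg_abs_pow_le f hf1 hfb hp k, pow_nonneg ht0 k,
      abs_nonneg (gg f (p ^ k))]
  have key := (EulerProduct.summable_and_hasSum_factoredNumbers_prod_filter_prime_tsum
    hW1 hWmul hsum q.primeFactors).2
  have hfilter : {p ∈ q.primeFactors | p.Prime} = q.primeFactors :=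
    Finset.filter_true_of_mem (fun p hp => Nat.prime_of_mem_primeFactors hp)
  rw [hfilter] at key
  have hprod : (∏ p ∈ q.primeFactors, ∑' n : ℕ, W (p ^ n))
      = ∏ p ∈ q.primeFactors, ∑' k : ℕ, |gg f (p ^ k)| * ((p : ℝ) ^ c) ^ k := by
    apply Finset.prod_congr rfl
    intro p hp
    exact tsum_congr (fun k => hpowW (Nat.prime_of_mem_primeFactors hp) k)
  rw [hprod] at key
  have hsupp : Function.support W ⊆ Nat.factoredNumbers q.primeFactors := by
    intro d hd
    by_contra hds
    rcases eq_or_ne d 0 with rfl | hd0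
    · apply hd; simp [hW]
    · apply hd; simp [hW, gg_smooth_zero f q hq hf1 hfmul hfout hd0 hds]
  exact (hasSum_subtype_iff_of_support_subset hsupp).mp key
end EP

private lemma sum_f_eq (f : ℕ → ℝ) (N : ℕ) :
    ∑ n ∈ Finset.Icc 1 N, f n = ∑ d ∈ Finset.Icc 1 N, gg f d * ((N / d : ℕ) : ℝ) := by
  have h1 : ∀ n ∈ Finset.Icc 1 N, f n = ∑ d ∈ Finset.Icc 1 N, if d ∣ n then gg f d else 0 := by
    intro n hn
    rw [Finset.mem_Icc] at hn
    have hn0 : n ≠ 0 := by omega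
    have hdiv : n.divisors = (Finset.Icc 1 N).filter (· ∣ n) := by
      ext d
      simp only [Nat.mem_divisors, Finset.mem_filter, Finset.mem_Icc]
      constructor
      · rintro ⟨hd, -⟩
        have hd1 : 1 ≤ d := Nat.one_le_iff_ne_zero.mpr (by rintro rfl; simp at hd; omega)
        exact ⟨⟨hd1, le_trans (Nat.le_of_dvd (by omega) hd) hn.2⟩, hd⟩
      · rintro ⟨-, hd⟩; exact ⟨hd, hn0⟩
    rw [← sum_divisors_gg f hn0, hdiv, Finset.sum_filter]
  rw [Finset.sum_congr rfl h1, Finset.sum_comm]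
  apply Finset.sum_congr rfl
  intro d _
  rw [← Finset.sum_filter]
  rw [Finset.sum_const]
  have hcard : ((Finset.Icc 1 N).filter (fun n => d ∣ n)).card = N / d := by
    have : Finset.Icc 1 N = Finset.Ioc 0 N := rfl
    rw [this]
    exact Nat.Ioc_filter_dvd_card_eq_div N d
  rw [hcard, nsmul_eq_mul, mul_comm]

private lemma tsum_gg_floor (f : ℕ → ℝ) (N : ℕ) :
    ∑' d : ℕ, gg f d * ((N / d : ℕ) : ℝ) = ∑ d ∈ Finset.Icc 1 N, gg f d * ((N / d : ℕ) : ℝ) := by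
  apply tsum_eq_sum
  intro d hd
  rw [Finset.mem_Icc] at hd
  rcases Nat.eq_zero_or_pos d with rfl | hd0
  · simp
  · have hdN : N < d := by omega
    rw [Nat.div_eq_of_lt hdN]
    simp

private lemma summable_gg_floor (f : ℕ → ℝ) (N : ℕ) :
    Summable (fun d : ℕ => gg f d * ((N / d : ℕ) : ℝ)) := by
  apply summable_of_finite_support
  apply Set.Finite.subset (Set.finite_Icc 1 N)
  intro d hd
  simp only [Function.mem_support] at hd
  simp only [Set.mem_Icc]
  constructor
  · by_contra h
    push_neg at h
    interval_cases d
    · simp at hd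
  · by_contra h
    push_neg at h
    rw [Nat.div_eq_of_lt h] at hd
    simp at hd

private lemma key_identity (f : ℕ → ℝ) (q : ℕ) (hq : 0 < q) (hf1 : f 1 = 1)
    (hfmul : ∀ m n : ℕ, Nat.Coprime m n → f (m * n) = f m * f n)
    (hfout : ∀ p k : ℕ, Nat.Prime p → ¬ p ∣ q → 1 ≤ k → f (p ^ k) = 1)
    (hfb : ∀ n, 0 ≤ f n ∧ f n ≤ 1) (N : ℕ) :
    ∑ n ∈ Finset.Icc 1 N, (f n - Gq f q)
      = ∑' d : ℕ, gg f d * (((N / d : ℕ) : ℝ) - (N : ℝ) / d) := by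
  have hW1 := hasSum_W1 f q hq hf1 hfmul hfout hfb
  have hsb : Summable (fun d : ℕ => gg f d * ((N : ℝ) / d)) := by
    apply (hW1.summable.mul_left (N : ℝ)).congr
    intro d; ring
  have hNG : (N : ℝ) * Gq f q = ∑' d : ℕ, gg f d * ((N : ℝ) / d) := by
    rw [← hW1.tsum_eq, ← tsum_mul_left]
    apply tsum_congr; intro d; ring
  rw [Finset.sum_sub_distrib, Finset.sum_const, Nat.card_Icc]
  have hcard : (N + 1 - 1) = N := by omega
  rw [hcard, nsmul_eq_mul, sum_f_eq f N, ← tsum_gg_floor f N, hNG,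
    ← Summable.tsum_sub (summable_gg_floor f N) hsb]
  apply tsum_congr; intro d; ring

private lemma cc_abs_le (N d : ℕ) (hd : 1 ≤ d) :
    |((N / d : ℕ) : ℝ) - (N : ℝ) / d| ≤ min 1 ((N : ℝ) / d) := by
  have hd0 : (0:ℝ) < d := by exact_mod_cast hd
  have hmod := Nat.div_add_mod N d
  have hcast : (d:ℝ) * ((N / d : ℕ) : ℝ) + ((N % d : ℕ) : ℝ) = (N : ℝ) := by
    exact_mod_cast congrArg (Nat.cast : ℕ → ℝ) hmod
  have hr0 : (0:ℝ) ≤ ((N % d : ℕ) : ℝ) := by positivity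
  have hr1 : ((N % d : ℕ) : ℝ) < d := by exact_mod_cast Nat.mod_lt N (by omega)
  have heq : ((N / d : ℕ) : ℝ) - (N : ℝ) / d = -(((N % d : ℕ) : ℝ) / d) := by
    field_simp
    linarith
  rw [heq, abs_neg, abs_of_nonneg (by positivity)]
  refine le_min ?_ ?_
  · rw [div_le_one hd0]; linarith
  · have : ((N % d : ℕ) : ℝ) ≤ N := by exact_mod_cast Nat.mod_le N d
    gcongr

private lemma min_le_rpow {y e : ℝ} (hy : 0 < y) (he0 : 0 ≤ e) (he1 : e ≤ 1) :
    min 1 y ≤ y ^ e := by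
  rcases le_total y 1 with h | h
  · calc min 1 y ≤ y := min_le_right _ _
      _ = y ^ (1:ℝ) := (Real.rpow_one y).symm
      _ ≤ y ^ e := Real.rpow_le_rpow_of_exponent_ge hy h he1
  · calc min 1 y ≤ 1 := min_le_left _ _
      _ = y ^ (0:ℝ) := (Real.rpow_zero y).symm
      _ ≤ y ^ e := Real.rpow_le_rpow_of_exponent_le h he0

private lemma two_rpow_le {c : ℝ} (hc : c ≤ -(1/3)) : (2:ℝ) ^ c ≤ 4/5 := by
  have h1 : (2:ℝ) ^ c ≤ (2:ℝ) ^ (-(1/3) : ℝ) :=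
    Real.rpow_le_rpow_of_exponent_le (by norm_num) hc
  refine h1.trans ?_
  set a := (2:ℝ) ^ (-(1/3) : ℝ) with ha
  have ha0 : 0 < a := Real.rpow_pos_of_pos (by norm_num) _
  have ha3 : a ^ (3:ℕ) = 1/2 := by
    rw [ha, ← Real.rpow_natCast ((2:ℝ) ^ (-(1/3):ℝ)) 3, ← Real.rpow_mul (by norm_num)]
    norm_num
  nlinarith [sq_nonneg (a - 4/5), sq_nonneg (a + 4/5), ha0.le]

private lemma int_exp_neg_Ioi (a : ℝ) {b : ℝ} (hb : 0 < b) :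
    ∫ x in Set.Ioi a, Real.exp (-(b * x)) = Real.exp (-(b * a)) / b := by
  have h := MeasureTheory.integral_comp_mul_left_Ioi (fun x => Real.exp (-x)) a hb
  rw [h, integral_exp_neg_Ioi, smul_eq_mul]
  ring

private lemma lint_exp_neg_Ioi (a : ℝ) {b : ℝ} (hb : 0 < b) {C : ℝ} (hC : 0 ≤ C) :
    ∫⁻ x in Set.Ioi a, ENNReal.ofReal (C * Real.exp (-(b * x)))
      = ENNReal.ofReal (C * (Real.exp (-(b * a)) / b)) := by
  rw [← MeasureTheory.ofReal_integral_eq_lintegral_ofReal]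
  · rw [MeasureTheory.integral_const_mul, int_exp_neg_Ioi a hb]
  · apply Integrable.const_mul
    have := exp_neg_integrableOn_Ioi a hb
    apply this.congr_fun ?_ measurableSet_Ioi
    intro x _; simp [neg_mul]
  · filter_upwards with x
    positivity

private lemma lint_exp_Ioc {a b ξ : ℝ} (hξ : 0 < ξ) (hab : a ≤ b) {C : ℝ} (hC : 0 ≤ C) :
    ∫⁻ x in Set.Ioc a b, ENNReal.ofReal (C * Real.exp (ξ * x))
      = ENNReal.ofReal (C * ((Real.exp (ξ * b) - Real.exp (ξ * a)) / ξ)) := by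
  have hcont : Continuous fun x : ℝ => C * Real.exp (ξ * x) := by continuity
  rw [← MeasureTheory.ofReal_integral_eq_lintegral_ofReal]
  · rw [← intervalIntegral.integral_of_le hab, intervalIntegral.integral_const_mul]
    have h := intervalIntegral.integral_comp_mul_left (a := a) (b := b)
      (f := fun x => Real.exp x) (c := ξ) (ne_of_gt hξ)
    rw [h, integral_exp, smul_eq_mul]
    ring_nf
  · exact hcont.integrableOn_Ioc
  · filter_upwards with x
    positivity

set_option maxHeartbeats 2000000 in
theorem statement10 (z : ℝ) (hz : 1 < z) (q : ℕ) (f : ℕ → ℝ)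
    (hq : 0 < q) (hpz : ∀ p ∈ q.primeFactors, (p : ℝ) ≤ z)
    (hf1 : f 1 = 1) (hfmul : ∀ m n : ℕ, Nat.Coprime m n → f (m * n) = f m * f n)
    (hfout : ∀ p k : ℕ, Nat.Prime p → ¬ p ∣ q → 1 ≤ k → f (p ^ k) = 1)
    (hfb : ∀ n, 0 ≤ f n ∧ f n ≤ 1)
    (ξ : ℝ) (hξ1 : 1 ≤ ξ) (hξ2 : ξ ≤ 2 / 3 * Real.log z) :
    (∀ u : ℝ, 0 ≤ u →
      |Efun f q z u| ≤ Real.exp (Hfun f q z 0 ξ - ξ * u + 5 * Jfun q z ξ)) ∧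
    ∫⁻ u in Set.Ioi (0 : ℝ), ENNReal.ofReal (Real.exp (ξ * u) * |Efun f q z u|) ≤
      ENNReal.ofReal (3 / ξ * Real.exp (Hfun f q z 0 ξ + 5 * Jfun q z ξ)) := by
  have hz0 : (0:ℝ) < z := by linarith
  have hL0 : 0 < Real.log z := Real.log_pos hz
  have hξ0 : (0:ℝ) < ξ := by linarith
  have hLξ : (3/2) * ξ ≤ Real.log z := by linarith
  have hLne : Real.log z ≠ 0 := ne_of_gt hL0
  set c : ℝ := ξ / Real.log z - 1 with hcdef
  have hβ0 : 0 < ξ / Real.log z := div_pos hξ0 hL0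
  have hc3 : c ≤ -(1/3) := by
    have : ξ / Real.log z ≤ 2/3 := by
      rw [div_le_iff₀ hL0]; linarith
    rw [hcdef]; linarith
  have hcneg : c < 0 := lt_of_le_of_lt hc3 (by norm_num)
  have hcm1 : -1 < c := by rw [hcdef]; linarith
  have hS := hasSum_W2 f q hq hf1 hfmul hfout hfb hcneg
  set S : ℝ := ∏ p ∈ q.primeFactors, ∑' k : ℕ, |gg f (p ^ k)| * ((p : ℝ) ^ c) ^ k with hSdef
  have hS0 : 0 ≤ S :=
    Finset.prod_nonneg (fun p _ => tsum_nonneg (fun k => by positivity))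
  -- the product bound `S ≤ exp(H + 5J)`
  have hfactor_le : ∀ p ∈ q.primeFactors, (∑' k : ℕ, |gg f (p^k)| * ((p:ℝ)^c)^k)
      ≤ Real.exp ((1 - f p) / p * (p:ℝ) ^ (ξ / Real.log z)
          + 5 * ((p:ℝ) ^ (2*ξ/Real.log z) / (p:ℝ)^2)) := by
    intro p hp
    have hpp := Nat.prime_of_mem_primeFactors hp
    have hp2 : (2:ℝ) ≤ p := by exact_mod_cast hpp.two_le
    have hp0 : (0:ℝ) < p := by linarith
    have htle : (p:ℝ) ^ c ≤ 4/5 :=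
      (Real.rpow_le_rpow_of_nonpos (by norm_num) hp2 hcneg.le).trans (two_rpow_le hc3)
    have ht0 : 0 ≤ (p:ℝ) ^ c := (Real.rpow_pos_of_pos hp0 c).le
    refine (gg_factor_bound f hf1 hfb hpp ht0 htle).trans ?_
    have e1 : (1 - f p) * (p:ℝ)^c = (1 - f p) / p * (p:ℝ) ^ (ξ / Real.log z) := by
      rw [hcdef, Real.rpow_sub hp0, Real.rpow_one]; ring
    have e2 : ((p:ℝ)^c)^2 = (p:ℝ) ^ (2*ξ/Real.log z) / (p:ℝ)^2 := by
      rw [sq, ← Real.rpow_add hp0, hcdef,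
        show ξ/Real.log z - 1 + (ξ/Real.log z - 1) = 2*ξ/Real.log z - ((2:ℕ):ℝ) by
          push_cast; ring,
        Real.rpow_sub hp0, Real.rpow_natCast]
    calc 1 + (1 - f p) * (p:ℝ)^c + 5*((p:ℝ)^c)^2
        ≤ Real.exp ((1 - f p) * (p:ℝ)^c + 5*((p:ℝ)^c)^2) := by
          have := Real.add_one_le_exp ((1 - f p) * (p:ℝ)^c + 5*((p:ℝ)^c)^2)
          linarith
      _ = _ := by rw [e1, e2]
  have hSexp : S ≤ Real.exp (Hfun f q z 0 ξ + 5 * Jfun q z ξ) := by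
    refine (Finset.prod_le_prod (fun p _ => tsum_nonneg (fun k => by positivity))
      hfactor_le).trans_eq ?_
    rw [← Real.exp_sum]
    congr 1
    simp only [Hfun, Jfun, pow_zero, mul_one, Finset.mul_sum, ← Finset.sum_add_distrib]
  -- the majorant function
  set m : ℝ → ℕ → ℝ := fun u d =>
    if 2 ≤ d then |gg f d| * min 1 (Real.exp (Real.log z * u) / d) else 0 with hmdef
  have hm0 : ∀ u d, 0 ≤ m u d := by
    intro u d
    rw [hmdef]; dsimp only
    split_ifs with h
    · have : 0 ≤ min 1 (Real.exp (Real.log z * u) / d) := le_min zero_le_one (by positivity)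
      positivity
    · exact le_refl 0
  have hm_le : ∀ u : ℝ, ∀ d : ℕ,
      m u d ≤ (Real.exp (Real.log z * u)) ^ (-c) * (|gg f d| * (d:ℝ) ^ c) := by
    intro u d
    rw [hmdef]; dsimp only
    split_ifs with h2
    · have hd0 : (0:ℝ) < d := by exact_mod_cast (by omega : 0 < d)
      have hX0 : (0:ℝ) < Real.exp (Real.log z * u) := Real.exp_pos _
      have h3 : min 1 (Real.exp (Real.log z * u) / d)
          ≤ (Real.exp (Real.log z * u) / d) ^ (-c) :=
        min_le_rpow (by positivity) (by linarith) (by linarith)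
      have h4 : (Real.exp (Real.log z * u) / d) ^ (-c)
          = (Real.exp (Real.log z * u)) ^ (-c) * (d:ℝ) ^ c := by
        rw [Real.div_rpow hX0.le hd0.le, Real.rpow_neg hd0.le c, div_eq_mul_inv, inv_inv]
      calc |gg f d| * min 1 (Real.exp (Real.log z * u) / d)
          ≤ |gg f d| * ((Real.exp (Real.log z * u)) ^ (-c) * (d:ℝ) ^ c) :=
            mul_le_mul_of_nonneg_left (h3.trans_eq h4) (abs_nonneg _)
        _ = (Real.exp (Real.log z * u)) ^ (-c) * (|gg f d| * (d:ℝ) ^ c) := by ring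
    · positivity
  have hmsum : ∀ u : ℝ, Summable (m u) := fun u =>
    Summable.of_nonneg_of_le (hm0 u) (hm_le u) (hS.summable.mul_left _)
  -- key bound
  have hkey : ∀ u : ℝ, 0 ≤ u → |Efun f q z u| ≤ z ^ (-u) * ∑' d : ℕ, m u d := by
    intro u hu
    have hxpos : (0:ℝ) < z ^ u := Real.rpow_pos_of_pos hz0 u
    set N : ℕ := ⌊z ^ u⌋₊ with hNdef
    have hNx : (N:ℝ) ≤ z ^ u := Nat.floor_le hxpos.le
    have hNX : (N:ℝ) ≤ Real.exp (Real.log z * u) := by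
      rw [← Real.rpow_def_of_pos hz0 u]; exact hNx
    set cc : ℕ → ℝ := fun d => ((N / d : ℕ) : ℝ) - (N : ℝ) / d with hccdef
    have hterm : ∀ d : ℕ, |gg f d * cc d| ≤ m u d := by
      intro d
      rw [abs_mul]
      match d with
      | 0 => rw [hccdef, hmdef]; simp
      | 1 => rw [hccdef, hmdef]; simp
      | (n+2) =>
        have hd1 : 1 ≤ n + 2 := by omega
        have hd0 : (0:ℝ) < ((n+2 : ℕ):ℝ) := by positivity
        rw [hmdef]; dsimp only
        rw [if_pos (by omega : 2 ≤ n + 2)]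
        apply mul_le_mul_of_nonneg_left _ (abs_nonneg _)
        refine (cc_abs_le N (n+2) hd1).trans (min_le_min le_rfl ?_)
        gcongr
    have hsum_cc : Summable (fun d : ℕ => |gg f d * cc d|) :=
      Summable.of_nonneg_of_le (fun d => abs_nonneg _) hterm (hmsum u)
    have hEfun : Efun f q z u = z ^ (-u) * ∑' d : ℕ, gg f d * cc d := by
      rw [Efun, key_identity f q hq hf1 hfmul hfout hfb N]
    have hzu0 : (0:ℝ) ≤ z ^ (-u) := (Real.rpow_pos_of_pos hz0 _).le
    rw [hEfun, abs_mul, abs_of_nonneg hzu0]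
    apply mul_le_mul_of_nonneg_left _ hzu0
    calc |∑' d : ℕ, gg f d * cc d| ≤ ∑' d : ℕ, |gg f d * cc d| := by
          have h := norm_tsum_le_tsum_norm
            (f := fun d : ℕ => gg f d * cc d) (by simpa only [Real.norm_eq_abs] using hsum_cc)
          simpa only [Real.norm_eq_abs] using h
      _ ≤ ∑' d : ℕ, m u d := Summable.tsum_le_tsum hterm hsum_cc (hmsum u)
  -- sum of the majorant
  have hmtsum_le : ∀ u : ℝ,
      (∑' d : ℕ, m u d) ≤ (Real.exp (Real.log z * u)) ^ (-c) * S := by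
    intro u
    calc (∑' d : ℕ, m u d)
        ≤ ∑' d : ℕ, (Real.exp (Real.log z * u)) ^ (-c) * (|gg f d| * (d:ℝ) ^ c) :=
          Summable.tsum_le_tsum (hm_le u) (hmsum u) (hS.summable.mul_left _)
      _ = (Real.exp (Real.log z * u)) ^ (-c) * S := by rw [tsum_mul_left, hS.tsum_eq]
  have hcollapse : ∀ u : ℝ,
      z ^ (-u) * (Real.exp (Real.log z * u)) ^ (-c) = Real.exp (-(ξ * u)) := by
    intro u
    rw [Real.rpow_def_of_pos hz0 (-u), ← Real.exp_mul, ← Real.exp_add]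
    congr 1
    rw [hcdef]
    field_simp
    ring
  constructor
  · -- part 1
    intro u hu
    calc |Efun f q z u| ≤ z ^ (-u) * ∑' d : ℕ, m u d := hkey u hu
      _ ≤ z ^ (-u) * ((Real.exp (Real.log z * u)) ^ (-c) * S) :=
          mul_le_mul_of_nonneg_left (hmtsum_le u) (Real.rpow_pos_of_pos hz0 _).le
      _ = (z ^ (-u) * (Real.exp (Real.log z * u)) ^ (-c)) * S := by ring
      _ ≤ Real.exp (-(ξ * u)) * Real.exp (Hfun f q z 0 ξ + 5 * Jfun q z ξ) := by
          rw [hcollapse u]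
          exact mul_le_mul_of_nonneg_left hSexp (Real.exp_pos _).le
      _ = Real.exp (Hfun f q z 0 ξ - ξ * u + 5 * Jfun q z ξ) := by
          rw [← Real.exp_add]; ring_nf
  -- part 2
  · set φ : ℕ → ℝ → ℝ := fun d u => Real.exp ((ξ - Real.log z) * u) * m u d with hφdef
    have hφ0 : ∀ d u, 0 ≤ φ d u := fun d u =>
      mul_nonneg (Real.exp_pos _).le (hm0 u d)
    have hφsum : ∀ u : ℝ, Summable (fun d => φ d u) := fun u => (hmsum u).mul_left _
    have hpt : ∀ u ∈ Set.Ioi (0:ℝ), ENNReal.ofReal (Real.exp (ξ * u) * |Efun f q z u|)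
        ≤ ∑' d : ℕ, ENNReal.ofReal (φ d u) := by
      intro u hu
      have hu0 : (0:ℝ) ≤ u := le_of_lt hu
      have hc1 : Real.exp (ξ * u) * z ^ (-u) = Real.exp ((ξ - Real.log z) * u) := by
        rw [Real.rpow_def_of_pos hz0 (-u), ← Real.exp_add]
        congr 1; ring
      have h1 : Real.exp (ξ * u) * |Efun f q z u| ≤ ∑' d : ℕ, φ d u := by
        calc Real.exp (ξ * u) * |Efun f q z u|
            ≤ Real.exp (ξ * u) * (z ^ (-u) * ∑' d : ℕ, m u d) :=
              mul_le_mul_of_nonneg_left (hkey u hu0) (Real.exp_pos _).le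
          _ = Real.exp ((ξ - Real.log z) * u) * ∑' d : ℕ, m u d := by
              rw [← mul_assoc, hc1]
          _ = ∑' d : ℕ, φ d u := by rw [← tsum_mul_left]
      calc ENNReal.ofReal (Real.exp (ξ * u) * |Efun f q z u|)
          ≤ ENNReal.ofReal (∑' d : ℕ, φ d u) := ENNReal.ofReal_le_ofReal h1
        _ = ∑' d : ℕ, ENNReal.ofReal (φ d u) :=
            ENNReal.ofReal_tsum_of_nonneg (fun d => hφ0 d u) (hφsum u)
    have hφmeas : ∀ d : ℕ, Measurable (fun u => ENNReal.ofReal (φ d u)) := by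
      intro d
      apply Measurable.ennreal_ofReal
      rw [hφdef]; dsimp only
      apply Measurable.mul
      · fun_prop
      · rw [hmdef]; dsimp only
        split_ifs with h2
        · apply Measurable.mul measurable_const
          apply Measurable.min measurable_const
          fun_prop
        · exact measurable_const
    set ρ : ℕ → ℝ := fun d => if 2 ≤ d then 3 / ξ * (|gg f d| * (d:ℝ) ^ c) else 0 with hρdef
    have hρ0 : ∀ d, 0 ≤ ρ d := by
      intro d; rw [hρdef]; dsimp only
      split_ifs
      · positivity
      · exact le_refl 0
    have hρle : ∀ d, ρ d ≤ 3/ξ * (|gg f d| * (d:ℝ) ^ c) := by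
      intro d; rw [hρdef]; dsimp only
      split_ifs
      · exact le_refl _
      · positivity
    have hρsum : Summable ρ :=
      Summable.of_nonneg_of_le hρ0 hρle (hS.summable.mul_left (3/ξ))
    have hint : ∀ d : ℕ, (∫⁻ u in Set.Ioi (0:ℝ), ENNReal.ofReal (φ d u))
        ≤ ENNReal.ofReal (ρ d) := by
      intro d
      match d with
      | 0 =>
        have hz' : ∀ u : ℝ, φ 0 u = 0 := by intro u; rw [hφdef, hmdef]; simp
        simp only [hz', ENNReal.ofReal_zero, MeasureTheory.lintegral_zero]
        exact zero_le
      | 1 =>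
        have hz' : ∀ u : ℝ, φ 1 u = 0 := by intro u; rw [hφdef, hmdef]; simp
        simp only [hz', ENNReal.ofReal_zero, MeasureTheory.lintegral_zero]
        exact zero_le
      | (n+2) =>
        have h2d : 2 ≤ n + 2 := by omega
        have hD1 : (1:ℝ) ≤ ((n+2 : ℕ):ℝ) := by exact_mod_cast (by omega : 1 ≤ n + 2)
        have hD0 : (0:ℝ) < ((n+2 : ℕ):ℝ) := by linarith
        have hlogD0 : 0 ≤ Real.log ((n+2 : ℕ):ℝ) := Real.log_nonneg hD1
        set u₀ : ℝ := Real.log ((n+2 : ℕ):ℝ) / Real.log z with hu₀def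
        have hu₀0 : 0 ≤ u₀ := div_nonneg hlogD0 hL0.le
        have hgg0 : 0 ≤ |gg f (n+2)| := abs_nonneg _
        have hDβ : Real.exp (ξ * u₀) = ((n+2 : ℕ):ℝ) ^ (ξ / Real.log z) := by
          rw [Real.rpow_def_of_pos hD0, hu₀def]
          congr 1
          field_simp
        have hdc : ((n+2 : ℕ):ℝ) ^ c = ((n+2 : ℕ):ℝ) ^ (ξ / Real.log z) / ((n+2 : ℕ):ℝ) := by
          rw [hcdef, Real.rpow_sub hD0, Real.rpow_one]
        have hDc : Real.exp (-((Real.log z - ξ) * u₀)) = ((n+2 : ℕ):ℝ) ^ c := by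
          rw [Real.rpow_def_of_pos hD0, hcdef, hu₀def]
          congr 1
          field_simp
          ring
        have hb2 : 0 < Real.log z - ξ := by linarith
        rw [← Set.Ioc_union_Ioi_eq_Ioi hu₀0, MeasureTheory.lintegral_union measurableSet_Ioi
          (Set.Ioc_disjoint_Ioi le_rfl)]
        have hIoc : (∫⁻ u in Set.Ioc (0:ℝ) u₀, ENNReal.ofReal (φ (n+2) u))
            ≤ ENNReal.ofReal (|gg f (n+2)| * ((n+2 : ℕ):ℝ) ^ c * (1/ξ)) := by
          have hb : ∀ u ∈ Set.Ioc (0:ℝ) u₀, ENNReal.ofReal (φ (n+2) u)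
              ≤ ENNReal.ofReal (|gg f (n+2)| / ((n+2 : ℕ):ℝ) * Real.exp (ξ * u)) := by
            intro u _
            apply ENNReal.ofReal_le_ofReal
            rw [hφdef, hmdef]; dsimp only
            rw [if_pos h2d]
            have hexp : Real.exp ((ξ - Real.log z) * u) * Real.exp (Real.log z * u)
                = Real.exp (ξ * u) := by rw [← Real.exp_add]; congr 1; ring
            calc Real.exp ((ξ - Real.log z) * u)
                  * (|gg f (n+2)| * min 1 (Real.exp (Real.log z * u) / ((n+2 : ℕ):ℝ)))
                ≤ Real.exp ((ξ - Real.log z) * u)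
                  * (|gg f (n+2)| * (Real.exp (Real.log z * u) / ((n+2 : ℕ):ℝ))) := by
                  apply mul_le_mul_of_nonneg_left _ (Real.exp_pos _).le
                  exact mul_le_mul_of_nonneg_left (min_le_right _ _) hgg0
              _ = |gg f (n+2)| / ((n+2 : ℕ):ℝ) * Real.exp (ξ * u) := by
                  rw [← hexp]; ring
          calc (∫⁻ u in Set.Ioc (0:ℝ) u₀, ENNReal.ofReal (φ (n+2) u))
              ≤ ∫⁻ u in Set.Ioc (0:ℝ) u₀,
                  ENNReal.ofReal (|gg f (n+2)| / ((n+2 : ℕ):ℝ) * Real.exp (ξ * u)) :=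
                MeasureTheory.setLIntegral_mono
                  (Measurable.ennreal_ofReal (by fun_prop)) hb
            _ = ENNReal.ofReal (|gg f (n+2)| / ((n+2 : ℕ):ℝ)
                  * ((Real.exp (ξ * u₀) - Real.exp (ξ * 0))/ξ)) :=
                lint_exp_Ioc hξ0 hu₀0 (by positivity)
            _ ≤ ENNReal.ofReal (|gg f (n+2)| * ((n+2 : ℕ):ℝ) ^ c * (1/ξ)) := by
                apply ENNReal.ofReal_le_ofReal
                rw [mul_zero, Real.exp_zero, hDβ, hdc]
                have h1 : (((n+2 : ℕ):ℝ) ^ (ξ / Real.log z) - 1)/ξ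
                    ≤ ((n+2 : ℕ):ℝ) ^ (ξ / Real.log z)/ξ := by gcongr; linarith
                calc |gg f (n+2)| / ((n+2 : ℕ):ℝ)
                      * ((((n+2 : ℕ):ℝ) ^ (ξ / Real.log z) - 1)/ξ)
                    ≤ |gg f (n+2)| / ((n+2 : ℕ):ℝ)
                      * (((n+2 : ℕ):ℝ) ^ (ξ / Real.log z)/ξ) :=
                      mul_le_mul_of_nonneg_left h1 (by positivity)
                  _ = |gg f (n+2)| * (((n+2 : ℕ):ℝ) ^ (ξ / Real.log z) / ((n+2 : ℕ):ℝ))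
                      * (1/ξ) := by ring
        have hIoi : (∫⁻ u in Set.Ioi u₀, ENNReal.ofReal (φ (n+2) u))
            ≤ ENNReal.ofReal (|gg f (n+2)| * ((n+2 : ℕ):ℝ) ^ c * (2/ξ)) := by
          have hbnd : ∀ u ∈ Set.Ioi u₀, ENNReal.ofReal (φ (n+2) u)
              ≤ ENNReal.ofReal (|gg f (n+2)| * Real.exp (-((Real.log z - ξ) * u))) := by
            intro u _
            apply ENNReal.ofReal_le_ofReal
            rw [hφdef, hmdef]; dsimp only
            rw [if_pos h2d]
            have hexp : Real.exp ((ξ - Real.log z) * u)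
                = Real.exp (-((Real.log z - ξ) * u)) := by congr 1; ring
            calc Real.exp ((ξ - Real.log z) * u)
                  * (|gg f (n+2)| * min 1 (Real.exp (Real.log z * u) / ((n+2 : ℕ):ℝ)))
                ≤ Real.exp ((ξ - Real.log z) * u) * (|gg f (n+2)| * 1) := by
                  apply mul_le_mul_of_nonneg_left _ (Real.exp_pos _).le
                  exact mul_le_mul_of_nonneg_left (min_le_left _ _) hgg0
              _ = |gg f (n+2)| * Real.exp (-((Real.log z - ξ) * u)) := by
                  rw [hexp]; ring
          calc (∫⁻ u in Set.Ioi u₀, ENNReal.ofReal (φ (n+2) u))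
              ≤ ∫⁻ u in Set.Ioi u₀,
                  ENNReal.ofReal (|gg f (n+2)| * Real.exp (-((Real.log z - ξ) * u))) :=
                MeasureTheory.setLIntegral_mono
                  (Measurable.ennreal_ofReal (by fun_prop)) hbnd
            _ = ENNReal.ofReal (|gg f (n+2)|
                  * (Real.exp (-((Real.log z - ξ) * u₀))/(Real.log z - ξ))) :=
                lint_exp_neg_Ioi u₀ hb2 hgg0
            _ ≤ ENNReal.ofReal (|gg f (n+2)| * ((n+2 : ℕ):ℝ) ^ c * (2/ξ)) := by
                apply ENNReal.ofReal_le_ofReal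
                rw [hDc]
                have h1 : 1/(Real.log z - ξ) ≤ 2/ξ := by
                  rw [div_le_div_iff₀ hb2 hξ0]; linarith
                calc |gg f (n+2)| * (((n+2 : ℕ):ℝ) ^ c/(Real.log z - ξ))
                    = |gg f (n+2)| * ((n+2 : ℕ):ℝ) ^ c * (1/(Real.log z - ξ)) := by ring
                  _ ≤ |gg f (n+2)| * ((n+2 : ℕ):ℝ) ^ c * (2/ξ) := by
                      apply mul_le_mul_of_nonneg_left h1 (by positivity)
        calc (∫⁻ u in Set.Ioc (0:ℝ) u₀, ENNReal.ofReal (φ (n+2) u))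
              + (∫⁻ u in Set.Ioi u₀, ENNReal.ofReal (φ (n+2) u))
            ≤ ENNReal.ofReal (|gg f (n+2)| * ((n+2 : ℕ):ℝ) ^ c * (1/ξ))
              + ENNReal.ofReal (|gg f (n+2)| * ((n+2 : ℕ):ℝ) ^ c * (2/ξ)) :=
              add_le_add hIoc hIoi
          _ = ENNReal.ofReal (|gg f (n+2)| * ((n+2 : ℕ):ℝ) ^ c * (1/ξ)
              + |gg f (n+2)| * ((n+2 : ℕ):ℝ) ^ c * (2/ξ)) :=
              (ENNReal.ofReal_add (by positivity) (by positivity)).symm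
          _ = ENNReal.ofReal (ρ (n+2)) := by
              rw [hρdef]; dsimp only
              rw [if_pos h2d]
              congr 1
              field_simp
              ring
    calc ∫⁻ u in Set.Ioi (0:ℝ), ENNReal.ofReal (Real.exp (ξ * u) * |Efun f q z u|)
        ≤ ∫⁻ u in Set.Ioi (0:ℝ), ∑' d : ℕ, ENNReal.ofReal (φ d u) :=
          MeasureTheory.setLIntegral_mono (Measurable.ennreal_tsum hφmeas) hpt
      _ = ∑' d : ℕ, ∫⁻ u in Set.Ioi (0:ℝ), ENNReal.ofReal (φ d u) :=
          MeasureTheory.lintegral_tsum (fun d => (hφmeas d).aemeasurable)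
      _ ≤ ∑' d : ℕ, ENNReal.ofReal (ρ d) := ENNReal.tsum_le_tsum hint
      _ = ENNReal.ofReal (∑' d : ℕ, ρ d) := (ENNReal.ofReal_tsum_of_nonneg hρ0 hρsum).symm
      _ ≤ ENNReal.ofReal (3 / ξ * Real.exp (Hfun f q z 0 ξ + 5 * Jfun q z ξ)) := by
          apply ENNReal.ofReal_le_ofReal
          calc (∑' d : ℕ, ρ d) ≤ ∑' d : ℕ, 3/ξ * (|gg f d| * (d:ℝ) ^ c) :=
                Summable.tsum_le_tsum hρle hρsum (hS.summable.mul_left _)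
            _ = 3/ξ * S := by rw [tsum_mul_left, hS.tsum_eq]
            _ ≤ 3/ξ * Real.exp (Hfun f q z 0 ξ + 5 * Jfun q z ξ) :=
                mul_le_mul_of_nonneg_left hSexp (by positivity)
end
end
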